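/- arXiv:0707.2340 — 7 statements merged into one kernel-verified Lean document; each statement's English description precedes it below -/
import Mathlib

section
/- Let f be a multi-affine real stable polynomial in two variables with real coefficients, and for θ ∈ [0,1] define T_θ(f)(z1,z2) = θ·f(z1,z2) + (1−θ)·f(z2,z1). Then T_θ(f) is real stable. -/
/-- If a multi-affine real polynomial in two variables is stable, then
`a00*a11 ≤ a01*a10`. -/
lemma det_le_aux (a00 a01 a10 a11 : ℝ)
    (hstable : ∀ z1 z2 : ℂ, 0 < z1.im → 0 < z2.im →
      (a00 : ℂ) + (a01 : ℂ) * z2 + (a10 : ℂ) * z1 + (a11 : ℂ) * z1 * z2 ≠ 0) :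
    a00 * a11 ≤ a01 * a10 := by
  by_contra h
  push_neg at h
  have hq : (a01 : ℂ) + (a11 : ℂ) * Complex.I ≠ 0 := by
    intro h0
    rw [Complex.ext_iff] at h0
    simp at h0
    rw [h0.1, h0.2] at h
    simp at h
  set q : ℂ := (a01 : ℂ) + (a11 : ℂ) * Complex.I with hqdef
  set z2 : ℂ := -((a00 : ℂ) + (a10 : ℂ) * Complex.I) / q with hz2
  have hnormpos : 0 < Complex.normSq q := by
    rwa [Complex.normSq_pos]
  have him : z2.im = (a00 * a11 - a01 * a10) / Complex.normSq q := by
    rw [hz2, Complex.div_im]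
    simp [hqdef, Complex.normSq]
    ring
  have himpos : 0 < z2.im := by
    rw [him]
    apply div_pos (by linarith) hnormpos
  have := hstable Complex.I z2 (by simp) himpos
  apply this
  rw [hz2]
  field_simp
  ring

/-- Partial symmetrization preserves real stability for multi-affine real polynomials
in two variables: if `f(z₁,z₂) = a₀₀ + a₀₁ z₂ + a₁₀ z₁ + a₁₁ z₁ z₂` is real stable and
`θ ∈ [0,1]`, then `T_θ(f)(z₁,z₂) = θ f(z₁,z₂) + (1-θ) f(z₂,z₁)` is real stable. -/
theorem stmt1 (a00 a01 a10 a11 : ℝ) (θ : ℝ) (hθ0 : 0 ≤ θ) (hθ1 : θ ≤ 1)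
    (hstable : ∀ z1 z2 : ℂ, 0 < z1.im → 0 < z2.im →
      (a00 : ℂ) + (a01 : ℂ) * z2 + (a10 : ℂ) * z1 + (a11 : ℂ) * z1 * z2 ≠ 0) :
    ∀ z1 z2 : ℂ, 0 < z1.im → 0 < z2.im →
      (θ : ℂ) * ((a00 : ℂ) + (a01 : ℂ) * z2 + (a10 : ℂ) * z1 + (a11 : ℂ) * z1 * z2) +
      (1 - (θ : ℂ)) * ((a00 : ℂ) + (a01 : ℂ) * z1 + (a10 : ℂ) * z2 + (a11 : ℂ) * z2 * z1) ≠ 0 := by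
  intro z1 z2 h1 h2 hg
  have hdet : a00 * a11 ≤ a01 * a10 := det_le_aux a00 a01 a10 a11 hstable
  set b : ℝ := θ * a01 + (1 - θ) * a10 with hb
  set c : ℝ := θ * a10 + (1 - θ) * a01 with hc
  have hbc : a00 * a11 ≤ b * c := by
    have h0 : b * c - a01 * a10 = θ * (1 - θ) * (a01 - a10) ^ 2 := by rw [hb, hc]; ring
    nlinarith [mul_nonneg (mul_nonneg hθ0 (by linarith : (0:ℝ) ≤ 1 - θ)) (sq_nonneg (a01 - a10))]
  have hg' : (a00 : ℂ) + (b : ℂ) * z2 + (c : ℂ) * z1 + (a11 : ℂ) * z1 * z2 = 0 := by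
    rw [hb, hc]
    push_cast
    linear_combination hg
  rw [Complex.ext_iff] at hg'
  simp only [Complex.add_re, Complex.add_im, Complex.mul_re, Complex.mul_im,
    Complex.ofReal_re, Complex.ofReal_im, Complex.zero_re, Complex.zero_im] at hg'
  obtain ⟨hre, him⟩ := hg'
  set x1 := z1.re; set y1 := z1.im; set x2 := z2.re; set y2 := z2.im
  have key : y2 * ((b + a11 * x1) ^ 2 + (a11 * y1) ^ 2) = - (y1 * (b * c - a00 * a11)) := by
    linear_combination (b + a11 * x1) * him - a11 * y1 * hre
  have hsq : 0 ≤ (b + a11 * x1) ^ 2 + (a11 * y1) ^ 2 := by positivity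
  have hzero : (b + a11 * x1) ^ 2 + (a11 * y1) ^ 2 = 0 := by
    nlinarith [mul_nonneg (le_of_lt h1) (by linarith : (0:ℝ) ≤ b * c - a00 * a11)]
  have s1 : (b + a11 * x1) ^ 2 = 0 := by nlinarith [sq_nonneg (a11 * y1)]
  have s2 : (a11 * y1) ^ 2 = 0 := by nlinarith [sq_nonneg (b + a11 * x1)]
  have e1 : b + a11 * x1 = 0 := sq_eq_zero_iff.mp s1
  have e2 : a11 * y1 = 0 := sq_eq_zero_iff.mp s2
  have ha11 : a11 = 0 := by
    rcases mul_eq_zero.mp e2 with h | h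
    · exact h
    · exact absurd h (by linarith)
  have hb0 : b = 0 := by rw [ha11, zero_mul, add_zero] at e1; exact e1
  have hc0 : c = 0 := by
    have : c * y1 = 0 := by
      have := him
      rw [ha11, hb0] at this
      linarith [this]
    rcases mul_eq_zero.mp this with h | h
    · exact h
    · exact absurd h (by linarith)
  have ha00 : a00 = 0 := by
    have := hre
    rw [ha11, hb0, hc0] at this
    linarith
  have hsum : a01 + a10 = 0 := by
    have : b + c = a01 + a10 := by rw [hb, hc]; ring
    linarith [hb0, hc0, this]
  have := hstable Complex.I Complex.I (by simp) (by simp)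
  apply this
  rw [ha00, ha11]
  push_cast
  rw [Complex.ext_iff]
  constructor <;> simp [Complex.mul_re, Complex.mul_im] <;> linarith
end

section
/- Let A1, ..., Am be complex positive semi-definite n×n matrices and B a complex Hermitian n×n matrix. Then the polynomial f(z1,...,zm) = det(z1·A1 + ... + zm·Am + B) is either identically zero or real stable: it has real coefficients, and f(z) ≠ 0 whenever all coordinates zj have positive imaginary part. -/
open MvPolynomial ComplexOrder

/-- The determinantal polynomial `det(z₁A₁ + ⋯ + zₘAₘ + B)` as a multivariate polynomial. -/
noncomputable def detPencil (n m : ℕ) (A : Fin m → Matrix (Fin n) (Fin n) ℂ)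
    (B : Matrix (Fin n) (Fin n) ℂ) : MvPolynomial (Fin m) ℂ :=
  Matrix.det ((∑ j, (MvPolynomial.X j : MvPolynomial (Fin m) ℂ) • (A j).map MvPolynomial.C) +
    B.map MvPolynomial.C)

lemma eval_detPencil (n m : ℕ) (A : Fin m → Matrix (Fin n) (Fin n) ℂ)
    (B : Matrix (Fin n) (Fin n) ℂ) (z : Fin m → ℂ) :
    MvPolynomial.eval z (detPencil n m A B) = ((∑ j, z j • A j) + B).det := by
  unfold detPencil
  rw [RingHom.map_det]
  congr 1
  ext i k
  simp [Matrix.add_apply, Matrix.sum_apply]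

lemma sum_mulVec_helper {n : ℕ} {ι : Type*} (s : Finset ι) (M : ι → Matrix (Fin n) (Fin n) ℂ)
    (v : Fin n → ℂ) : (∑ j ∈ s, M j).mulVec v = ∑ j ∈ s, (M j).mulVec v := by
  ext i
  simp only [Matrix.mulVec, dotProduct, Matrix.sum_apply, Finset.sum_apply,
    Finset.sum_mul]
  rw [Finset.sum_comm]

lemma dotProduct_sum_helper {n : ℕ} {ι : Type*} (s : Finset ι) (u : Fin n → ℂ)
    (w : ι → (Fin n → ℂ)) :
    dotProduct u (∑ j ∈ s, w j) = ∑ j ∈ s, dotProduct u (w j) := by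
  simp only [dotProduct, Finset.sum_apply, Finset.mul_sum]
  rw [Finset.sum_comm]

/-- If `A₁,…,Aₘ` are complex positive semi-definite `n×n` matrices and `B` is Hermitian,
then `f(z) = det(z₁A₁ + ⋯ + zₘAₘ + B)` is identically zero or real stable: it has real
coefficients and does not vanish when all coordinates have positive imaginary part. -/
theorem stmt2 (n m : ℕ) (A : Fin m → Matrix (Fin n) (Fin n) ℂ)
    (hA : ∀ j, (A j).PosSemidef) (B : Matrix (Fin n) (Fin n) ℂ) (hB : B.IsHermitian) :
    detPencil n m A B = 0 ∨
    ((∀ α : Fin m →₀ ℕ, ((detPencil n m A B).coeff α).im = 0) ∧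
      (∀ z : Fin m → ℂ, (∀ j, 0 < (z j).im) →
        MvPolynomial.eval z (detPencil n m A B) ≠ 0)) := by
  by_cases h0 : ∃ z : Fin m → ℂ, (∀ j, 0 < (z j).im) ∧
      MvPolynomial.eval z (detPencil n m A B) = 0
  · left
    obtain ⟨z, hz, hz0⟩ := h0
    rw [eval_detPencil] at hz0
    obtain ⟨v, hv, hMv⟩ := Matrix.exists_mulVec_eq_zero_iff.mpr hz0
    -- quadratic form identity
    have hdot : dotProduct (star v) (((∑ j, z j • A j) + B).mulVec v) = 0 := by
      rw [hMv, dotProduct_zero]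
    have hexp : (∑ j, z j * (dotProduct (star v) ((A j).mulVec v))) + dotProduct (star v) (B.mulVec v) = 0 := by
      rw [Matrix.add_mulVec, dotProduct_add, sum_mulVec_helper _ _ _,
        dotProduct_sum_helper] at hdot
      simpa only [Matrix.smul_mulVec, dotProduct_smul, smul_eq_mul] using hdot
    -- each aⱼ is nonneg real
    have ha : ∀ j, 0 ≤ dotProduct (star v) ((A j).mulVec v) := fun j => (hA j).dotProduct_mulVec_nonneg v
    have haim : ∀ j, (dotProduct (star v) ((A j).mulVec v)).im = 0 := fun j =>
      (Complex.nonneg_iff.mp (ha j)).2.symm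
    have hare : ∀ j, 0 ≤ (dotProduct (star v) ((A j).mulVec v)).re := fun j =>
      (Complex.nonneg_iff.mp (ha j)).1
    -- B's quadratic form is real
    have hbim : (dotProduct (star v) (B.mulVec v)).im = 0 := by
      have : star (dotProduct (star v) (B.mulVec v)) = dotProduct (star v) (B.mulVec v) := by
        calc star (dotProduct (star v) (B.mulVec v)) = dotProduct (star (B.mulVec v)) v := by
              rw [Matrix.star_dotProduct, star_star]
          _ = dotProduct (Matrix.vecMul (star v) B.conjTranspose) v := by rw [Matrix.star_mulVec]
          _ = dotProduct (star v) (B.mulVec v) := by rw [hB, ← Matrix.dotProduct_mulVec]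
      exact Complex.conj_eq_iff_im.mp this
    -- take imaginary part of the identity
    have him : (∑ j, (z j).im * (dotProduct (star v) ((A j).mulVec v)).re) = 0 := by
      have := congrArg Complex.im hexp
      simpa [Complex.add_im, Complex.mul_im, haim, hbim, Complex.im_sum] using this
    have hterm : ∀ j ∈ Finset.univ, (0:ℝ) ≤ (z j).im * (dotProduct (star v) ((A j).mulVec v)).re :=
      fun j _ => mul_nonneg (hz j).le (hare j)
    have hzero : ∀ j, dotProduct (star v) ((A j).mulVec v) = 0 := by
      intro j
      have := (Finset.sum_eq_zero_iff_of_nonneg hterm).mp him j (Finset.mem_univ j)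
      have hre : (dotProduct (star v) ((A j).mulVec v)).re = 0 := by
        rcases mul_eq_zero.mp this with h | h
        · exact absurd h (ne_of_gt (hz j))
        · exact h
      exact Complex.ext hre (haim j)
    have hAv : ∀ j, (A j).mulVec v = 0 := fun j =>
      ((hA j).dotProduct_mulVec_zero_iff v).mp (hzero j)
    have hBv : B.mulVec v = 0 := by
      have : ((∑ j, z j • A j) + B).mulVec v = B.mulVec v := by
        rw [Matrix.add_mulVec, sum_mulVec_helper _ _ _]
        simp [Matrix.smul_mulVec, hAv]
      rw [← this, hMv]
    -- the polynomial vanishes everywhere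
    apply MvPolynomial.funext
    intro w
    rw [eval_detPencil, map_zero]
    rw [← Matrix.exists_mulVec_eq_zero_iff]
    refine ⟨v, hv, ?_⟩
    rw [Matrix.add_mulVec, sum_mulVec_helper _ _ _, hBv]
    simp [Matrix.smul_mulVec, hAv]
  · right
    push_neg at h0
    refine ⟨?_, fun z hz => h0 z hz⟩
    -- real coefficients
    have hmap : MvPolynomial.map (starRingEnd ℂ) (detPencil n m A B) = detPencil n m A B := by
      apply MvPolynomial.funext
      intro w
      have h1 : MvPolynomial.eval w (MvPolynomial.map (starRingEnd ℂ) (detPencil n m A B))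
          = starRingEnd ℂ (MvPolynomial.eval (fun j => starRingEnd ℂ (w j)) (detPencil n m A B)) := by
        rw [MvPolynomial.eval_map]
        have h2 := MvPolynomial.eval₂_comp_left (starRingEnd ℂ) (RingHom.id ℂ)
          (fun j => starRingEnd ℂ (w j)) (detPencil n m A B)
        simp only [RingHom.comp_id] at h2
        rw [show MvPolynomial.eval (fun j => starRingEnd ℂ (w j)) (detPencil n m A B)
          = MvPolynomial.eval₂ (RingHom.id ℂ) (fun j => starRingEnd ℂ (w j)) (detPencil n m A B)
          from rfl, h2]
        congr 1
        funext j
        simp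
      rw [h1, eval_detPencil, eval_detPencil]
      set M := (∑ j, (starRingEnd ℂ) (w j) • A j) + B with hM
      have hdet : (starRingEnd ℂ) M.det = (M.map (starRingEnd ℂ)).det :=
        RingHom.map_det (starRingEnd ℂ) M
      rw [hdet]
      have hmapM : M.map (starRingEnd ℂ) = ((∑ j, w j • A j) + B).transpose := by
        ext i k
        have hAsym : ∀ j, (starRingEnd ℂ) (A j i k) = A j k i := by
          intro j
          have h2 := congrFun (congrFun (hA j).1 k) i
          simpa [Matrix.conjTranspose_apply] using h2
        have hBsym : (starRingEnd ℂ) (B i k) = B k i := by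
          have h2 := congrFun (congrFun hB k) i
          simpa [Matrix.conjTranspose_apply] using h2
        simp only [hM, Matrix.map_apply, Matrix.transpose_apply, Matrix.add_apply,
          Matrix.sum_apply, Matrix.smul_apply, smul_eq_mul, map_add, map_sum, map_mul,
          Complex.conj_conj, hAsym, hBsym]
      rw [hmapM, Matrix.det_transpose]
    intro α
    have := congrArg (fun p => MvPolynomial.coeff α p) hmap
    simp only [MvPolynomial.coeff_map] at this
    have : (starRingEnd ℂ) ((detPencil n m A B).coeff α) = (detPencil n m A B).coeff α := this
    exact Complex.conj_eq_iff_im.mp this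
end

section
/- Let A1, ..., Am be complex positive semi-definite n×n matrices and B a complex positive semi-definite n×n matrix. Then every coefficient of the polynomial f(z1,...,zm) = det(z1·A1 + ... + zm·Am + B), viewed as a polynomial in z1,...,zm, is a non-negative real number. -/
open MvPolynomial ComplexOrder

section Aux

open Finset Matrix Complex Equiv

variable {n m : ℕ}

/-- product of monomials is a monomial -/
lemma aux_prod_monomial {ι : Type*} (s : Finset ι) (β : ι → (Fin m →₀ ℕ)) (c : ι → ℂ) :
    (∏ i ∈ s, (MvPolynomial.monomial (β i) (c i) : MvPolynomial (Fin m) ℂ)) =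
      MvPolynomial.monomial (∑ i ∈ s, β i) (∏ i ∈ s, c i) := by
  classical
  induction s using Finset.induction with
  | empty => simp
  | insert _ _ h ih =>
    rw [Finset.prod_insert h, Finset.sum_insert h, Finset.prod_insert h, ih,
      MvPolynomial.monomial_mul]

section SqrtPort
open scoped MatrixOrder

noncomputable def Matrix.PosSemidef.sqrt {A : Matrix (Fin n) (Fin n) ℂ} (_hA : A.PosSemidef) :
    Matrix (Fin n) (Fin n) ℂ := CFC.sqrt A

lemma Matrix.PosSemidef.sqrt_mul_self {A : Matrix (Fin n) (Fin n) ℂ} (hA : A.PosSemidef) :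
    hA.sqrt * hA.sqrt = A := CFC.sqrt_mul_sqrt_self A hA.nonneg

lemma Matrix.PosSemidef.posSemidef_sqrt {A : Matrix (Fin n) (Fin n) ℂ} (hA : A.PosSemidef) :
    hA.sqrt.PosSemidef := (CFC.sqrt_nonneg A).posSemidef

end SqrtPort

/-- rank-one decomposition of a PSD matrix via its square root columns. -/
lemma aux_psd_decomp {A : Matrix (Fin n) (Fin n) ℂ} (hA : A.PosSemidef) :
    (∑ t : Fin n, Matrix.vecMulVec (fun i => hA.sqrt i t) (star fun i => hA.sqrt i t)) = A := by
  ext i k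
  have h1 : hA.sqrt * hA.sqrt = A := hA.sqrt_mul_self
  have h2 : (hA.sqrt)ᴴ = hA.sqrt := hA.posSemidef_sqrt.1
  calc (∑ t : Fin n, Matrix.vecMulVec (fun i => hA.sqrt i t) (star fun i => hA.sqrt i t)) i k
      = ∑ t : Fin n, hA.sqrt i t * (starRingEnd ℂ) (hA.sqrt k t) := by
        simp [Matrix.sum_apply, Matrix.vecMulVec_apply, Pi.star_apply, RCLike.star_def]
    _ = ∑ t : Fin n, hA.sqrt i t * hA.sqrt t k := by
        refine Finset.sum_congr rfl fun t _ => ?_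
        congr 1
        have := congrFun (congrFun h2 t) k
        simpa [Matrix.conjTranspose_apply] using this
    _ = (hA.sqrt * hA.sqrt) i k := by rw [Matrix.mul_apply]
    _ = A i k := by rw [h1]

/-- The key "Cauchy–Binet" lemma: each coefficient of the determinant of a sum of
monomial-scaled rank-one PSD matrices is a nonnegative real. -/
lemma aux_cauchy_binet {σ : Type*} [Fintype σ] [DecidableEq σ]
    (v : σ → Fin n → ℂ) (β : σ → (Fin m →₀ ℕ)) (α : Fin m →₀ ℕ) :
    ∃ r : ℝ, 0 ≤ r ∧
      MvPolynomial.coeff α (Matrix.det (∑ s : σ, (MvPolynomial.monomial (β s) (1:ℂ)) •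
        ((Matrix.vecMulVec (v s) (star (v s))).map MvPolynomial.C))) = (r : ℂ) := by
  classical
  -- notation
  set M : Matrix (Fin n) (Fin n) (MvPolynomial (Fin m) ℂ) :=
    ∑ s : σ, (MvPolynomial.monomial (β s) (1:ℂ)) •
        ((Matrix.vecMulVec (v s) (star (v s))).map MvPolynomial.C) with hMdef
  -- d g : determinant of the matrix with rows v (g i)
  set d : (Fin n → σ) → ℂ := fun g => Matrix.det (Matrix.of fun i k => v (g i) k) with hd
  set c : (Fin n → σ) → ℂ := fun g => (∏ i, v (g i) i) * (starRingEnd ℂ) (d g) with hc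
  -- Step A : determinant expansion
  have hrow : (M : Fin n → Fin n → MvPolynomial (Fin m) ℂ) = fun i =>
      ∑ s : σ, (MvPolynomial.monomial (β s) (v s i) : MvPolynomial (Fin m) ℂ) •
        (fun k => MvPolynomial.C ((starRingEnd ℂ) (v s k))) := by
    funext i k
    simp only [hMdef, Matrix.sum_apply, Matrix.smul_apply, Matrix.map_apply,
      Matrix.vecMulVec_apply, Pi.star_apply, RCLike.star_def, Finset.sum_apply, Pi.smul_apply,
      smul_eq_mul]
    refine Finset.sum_congr rfl fun s _ => ?_
    rw [_root_.map_mul, ← mul_assoc, mul_comm ((MvPolynomial.monomial (β s)) (1:ℂ))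
      (MvPolynomial.C (v s i)), MvPolynomial.C_mul_monomial, mul_one]
  have hdet : M.det = ∑ g : Fin n → σ,
      MvPolynomial.monomial (∑ i, β (g i)) (c g) := by
    have h0 : M.det = (Matrix.detRowAlternating (R := MvPolynomial (Fin m) ℂ)
        (n := Fin n)).toMultilinearMap M := rfl
    rw [h0, hrow, MultilinearMap.map_sum]
    refine Finset.sum_congr rfl fun g _ => ?_
    rw [MultilinearMap.map_smul_univ]
    have hfd : (Matrix.detRowAlternating (R := MvPolynomial (Fin m) ℂ)
        (n := Fin n)).toMultilinearMap
        (fun i => (fun k => MvPolynomial.C ((starRingEnd ℂ) (v (g i) k)))) =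
        MvPolynomial.C ((starRingEnd ℂ)
          (Matrix.det (Matrix.of fun i k => v (g i) k))) := by
      show Matrix.det (Matrix.of fun i k => MvPolynomial.C ((starRingEnd ℂ) (v (g i) k))) = _
      rw [(starRingEnd ℂ).map_det, RingHom.map_det]
      rfl
    rw [hfd, aux_prod_monomial, smul_eq_mul, MvPolynomial.C_apply,
      MvPolynomial.monomial_mul, add_zero]
  -- Step B : extract the coefficient
  have hcoeff : MvPolynomial.coeff α M.det = ∑ g ∈ Finset.univ.filter (fun g : Fin n → σ =>
      (∑ i, β (g i)) = α), c g := by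
    rw [hdet, MvPolynomial.coeff_sum, Finset.sum_filter]
    refine Finset.sum_congr rfl fun g _ => ?_
    rw [MvPolynomial.coeff_monomial]
  -- Step C : group the sum by the image of g.
  -- enumeration of an n-element subset
  let eF : ∀ S : {S : Finset σ // S.card = n}, Fin n ≃ (S.1 : Finset σ) := fun S =>
    (finCongr (by rw [Fintype.card_coe, S.2])).trans (Fintype.equivFin (S.1 : Finset σ)).symm
  let e : {S : Finset σ // S.card = n} → Fin n → σ := fun S i => (eF S i : σ)
  have he_mem : ∀ S i, e S i ∈ S.1 := fun S i => (eF S i).2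
  have he_inj : ∀ S, Function.Injective (e S) := by
    intro S x y hxy
    exact (eF S).injective (Subtype.ext hxy)
  have he_img : ∀ S, Finset.image (e S) Finset.univ = S.1 := by
    intro S
    apply Finset.eq_of_subset_of_card_le
    · intro x hx
      simp only [Finset.mem_image] at hx
      obtain ⟨i, _, rfl⟩ := hx
      exact he_mem S i
    · rw [Finset.card_image_of_injective _ (he_inj S), Finset.card_univ, Fintype.card_fin, S.2]
  have he_sum : ∀ (S : {S : Finset σ // S.card = n}),
      (∑ i, β (e S i)) = ∑ x ∈ S.1, β x := by
    intro S
    rw [← he_img S, Finset.sum_image (fun x _ y _ h => he_inj S h)]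
  -- the finset of admissible subsets
  set 𝒮 : Finset {S : Finset σ // S.card = n} :=
    Finset.univ.filter (fun S => (∑ x ∈ S.1, β x) = α) with h𝒮
  -- the determinant attached to a subset
  set dS : {S : Finset σ // S.card = n} → ℂ := fun S => d (e S) with hdS
  refine ⟨∑ S ∈ 𝒮, Complex.normSq (dS S), Finset.sum_nonneg fun S _ => Complex.normSq_nonneg _,
    ?_⟩
  rw [hcoeff]
  -- kill non-injective g
  have hzero : ∀ g : Fin n → σ, ¬Function.Injective g → c g = 0 := by
    intro g hg
    rw [Function.not_injective_iff] at hg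
    obtain ⟨i, j, hij, hne⟩ := hg
    have : d g = 0 := by
      apply Matrix.det_zero_of_row_eq hne
      funext k
      simp [hij]
    simp [hc, this]
  have hstep1 : (∑ g ∈ Finset.univ.filter (fun g : Fin n → σ => (∑ i, β (g i)) = α), c g)
      = ∑ g ∈ Finset.univ.filter (fun g : Fin n → σ =>
          ((∑ i, β (g i)) = α ∧ Function.Injective g)), c g := by
    symm
    apply Finset.sum_subset
    · intro g hg
      simp only [Finset.mem_filter] at hg ⊢
      exact ⟨hg.1, hg.2.1⟩
    · intro g hg hg2
      simp only [Finset.mem_filter, Finset.mem_univ, true_and] at hg hg2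
      exact hzero g (fun hinj => hg2 ⟨hg, hinj⟩)
  rw [hstep1]
  -- the bijection between pairs (subset, permutation) and admissible injective maps
  have hbij : (∑ p ∈ 𝒮 ×ˢ (Finset.univ : Finset (Equiv.Perm (Fin n))),
        c (fun i => e p.1 (p.2 i)))
      = ∑ g ∈ Finset.univ.filter (fun g : Fin n → σ =>
          ((∑ i, β (g i)) = α ∧ Function.Injective g)), c g := by
    refine Finset.sum_bij (fun p _ => fun i => e p.1 (p.2 i)) ?_ ?_ ?_ ?_
    · -- maps to
      rintro ⟨S, π⟩ hp
      dsimp only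
      simp only [Finset.mem_product, h𝒮, Finset.mem_filter, Finset.mem_univ, true_and] at hp ⊢
      constructor
      · rw [Equiv.sum_comp π (fun i => β (e S i)), he_sum S]
        exact hp.1
      · exact fun x y hxy => π.injective (he_inj S hxy)
    · -- injective
      rintro ⟨S, π⟩ hp ⟨S', π'⟩ hp' hpp
      dsimp only at hpp
      have himg : S = S' := by
        have h1 : Finset.image (fun i => e S (π i)) Finset.univ = S.1 := by
          rw [show (fun i => e S (π i)) = (e S) ∘ π from rfl, ← Finset.image_image,
            Finset.image_univ_equiv, he_img]
        have h2 : Finset.image (fun i => e S' (π' i)) Finset.univ = S'.1 := by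
          rw [show (fun i => e S' (π' i)) = (e S') ∘ π' from rfl, ← Finset.image_image,
            Finset.image_univ_equiv, he_img]
        apply Subtype.ext
        rw [← h1, ← h2, hpp]
      subst himg
      have hπ : π = π' := Equiv.ext fun i => he_inj S (congrFun hpp i)
      rw [hπ]
    · -- surjective
      intro g hg
      simp only [Finset.mem_filter, Finset.mem_univ, true_and] at hg
      obtain ⟨hgs, hginj⟩ := hg
      have hcard : (Finset.image g Finset.univ).card = n := by
        rw [Finset.card_image_of_injective _ hginj, Finset.card_univ, Fintype.card_fin]
      set S : {S : Finset σ // S.card = n} := ⟨Finset.image g Finset.univ, hcard⟩ with hS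
      have hSmem : S ∈ 𝒮 := by
        simp only [h𝒮, Finset.mem_filter, Finset.mem_univ, true_and, hS]
        rw [Finset.sum_image (fun x _ y _ h => hginj h)]
        exact hgs
      -- build the permutation
      have hgmem : ∀ i, g i ∈ S.1 := fun i => Finset.mem_image_of_mem g (Finset.mem_univ i)
      let gE : Fin n ≃ (S.1 : Finset σ) := Equiv.ofBijective (fun i => ⟨g i, hgmem i⟩) <| by
        rw [Fintype.bijective_iff_injective_and_card]
        constructor
        · intro x y hxy
          exact hginj (congrArg Subtype.val hxy)
        · rw [Fintype.card_coe, hcard, Fintype.card_fin]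
      refine ⟨⟨S, gE.trans (eF S).symm⟩, ?_, ?_⟩
      · simp only [Finset.mem_product, Finset.mem_univ, and_true]
        exact hSmem
      · funext i
        show e S ((eF S).symm (gE i)) = g i
        show ((eF S) ((eF S).symm (gE i)) : σ) = g i
        rw [Equiv.apply_symm_apply]
        rfl
    · intro p hp
      rfl
  rw [← hbij, Finset.sum_product]
  -- compute the inner sum over permutations
  have hinner : ∀ S ∈ 𝒮, (∑ π : Equiv.Perm (Fin n), c (fun i => e S (π i)))
      = (Complex.normSq (dS S) : ℂ) := by
    intro S _
    have hperm : ∀ π : Equiv.Perm (Fin n), d (fun i => e S (π i))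
        = ((Equiv.Perm.sign π : ℤ) : ℂ) * dS S := by
      intro π
      have h1 : (Matrix.of fun i k => v (e S (π i)) k)
          = (Matrix.of fun i k => v (e S i) k).submatrix π id := rfl
      show Matrix.det (Matrix.of fun i k => v (e S (π i)) k) = _
      rw [h1, Matrix.det_permute]
    calc (∑ π : Equiv.Perm (Fin n), c (fun i => e S (π i)))
        = ∑ π : Equiv.Perm (Fin n), ((Equiv.Perm.sign π : ℤ) : ℂ) *
            (∏ i, v (e S (π i)) i) * (starRingEnd ℂ) (dS S) := by
          refine Finset.sum_congr rfl fun π _ => ?_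
          rw [hc]
          simp only []
          rw [hperm π, _root_.map_mul, map_intCast]
          ring
      _ = (∑ π : Equiv.Perm (Fin n), ((Equiv.Perm.sign π : ℤ) : ℂ) *
            ∏ i, v (e S (π i)) i) * (starRingEnd ℂ) (dS S) := by
          rw [Finset.sum_mul]
      _ = dS S * (starRingEnd ℂ) (dS S) := by
          congr 1
          rw [hdS]
          simp only [hd]
          rw [Matrix.det_apply']
          rfl
      _ = (Complex.normSq (dS S) : ℂ) := Complex.mul_conj _
  rw [Finset.sum_congr rfl hinner]
  push_cast
  rfl

end Aux

/-- If `A₁,…,Aₘ` and `B` are complex positive semi-definite `n×n` matrices, then every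
coefficient of `f(z) = det(z₁A₁ + ⋯ + zₘAₘ + B)` is a non-negative real number. -/
theorem stmt3 (n m : ℕ) (A : Fin m → Matrix (Fin n) (Fin n) ℂ)
    (hA : ∀ j, (A j).PosSemidef) (B : Matrix (Fin n) (Fin n) ℂ) (hB : B.PosSemidef) :
    ∀ α : Fin m →₀ ℕ, ∃ r : ℝ, 0 ≤ r ∧ (detPencil n m A B).coeff α = (r : ℂ) := by
  intro α
  classical
  have hdec : ∀ (C' : Matrix (Fin n) (Fin n) ℂ) (hC' : C'.PosSemidef),
      C'.map (MvPolynomial.C (σ := Fin m) (R := ℂ)) =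
      ∑ t : Fin n, (Matrix.vecMulVec (fun i => hC'.sqrt i t)
        (star fun i => hC'.sqrt i t)).map (MvPolynomial.C (σ := Fin m) (R := ℂ)) := by
    intro C' hC'
    conv_lhs => rw [← aux_psd_decomp hC']
    ext i k
    simp [Matrix.map_apply, Matrix.sum_apply]
  have hM : ((∑ j, (MvPolynomial.X j : MvPolynomial (Fin m) ℂ) • (A j).map MvPolynomial.C) +
      B.map MvPolynomial.C) =
      ∑ s : (Fin m ⊕ Unit) × Fin n,
        (MvPolynomial.monomial
          ((fun s : (Fin m ⊕ Unit) × Fin n =>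
            Sum.elim (fun j => Finsupp.single j 1) (fun _ => 0) s.1) s) (1:ℂ)) •
        ((Matrix.vecMulVec
          ((fun s : (Fin m ⊕ Unit) × Fin n =>
            Sum.elim (fun j => fun i => (hA j).sqrt i s.2)
              (fun _ => fun i => hB.sqrt i s.2) s.1) s)
          (star ((fun s : (Fin m ⊕ Unit) × Fin n =>
            Sum.elim (fun j => fun i => (hA j).sqrt i s.2)
              (fun _ => fun i => hB.sqrt i s.2) s.1) s))).map
          (MvPolynomial.C (σ := Fin m) (R := ℂ))) := by
    rw [Fintype.sum_prod_type, Fintype.sum_sum_type]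
    congr 1
    · refine Finset.sum_congr rfl fun j _ => ?_
      rw [hdec (A j) (hA j), Finset.smul_sum]
      rfl
    · rw [Finset.univ_unique, Finset.sum_singleton]
      rw [hdec B hB]
      refine Finset.sum_congr rfl fun t _ => ?_
      have h1 : (MvPolynomial.monomial (0 : Fin m →₀ ℕ) (1:ℂ)) =
          (1 : MvPolynomial (Fin m) ℂ) := by
        rw [← MvPolynomial.C_apply, map_one]
      dsimp only [Sum.elim]
      rw [h1, one_smul]
  obtain ⟨r, hr, hco⟩ := aux_cauchy_binet (n := n) (m := m)
    (fun s : (Fin m ⊕ Unit) × Fin n =>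
      Sum.elim (fun j => fun i => (hA j).sqrt i s.2)
        (fun _ => fun i => hB.sqrt i s.2) s.1)
    (fun s => Sum.elim (fun j => Finsupp.single j 1) (fun _ => 0) s.1) α
  refine ⟨r, hr, ?_⟩
  show MvPolynomial.coeff α (detPencil n m A B) = _
  rw [detPencil, hM]
  exact hco
end

section
/- Let f ∈ ℝ[z1,...,zn] be a polynomial with all coefficients non-negative, of total degree d, and let f_H(z1,...,z_{n+1}) = z_{n+1}^d · f(z1/z_{n+1},...,zn/z_{n+1}) be its homogenization. If f_H is hyperbolic with respect to some vector e ∈ ℝ^{n+1} with all coordinates non-negative and f_H(e) ≠ 0, then f_H is hyperbolic with respect to every vector e' ∈ ℝ^{n+1} with all coordinates strictly positive. -/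
open MvPolynomial

/-- A homogeneous polynomial `p` is hyperbolic with respect to `e` if `p(e) ≠ 0` and for
every real `x` the univariate polynomial `t ↦ p(x + t e)` has only real zeros. -/
def IsHyperbolicWrt {m : ℕ} (p : MvPolynomial (Fin m) ℝ) (e : Fin m → ℝ) : Prop :=
  MvPolynomial.eval e p ≠ 0 ∧
  ∀ x : Fin m → ℝ, ∀ t : ℂ,
    MvPolynomial.eval (fun i => (x i : ℂ) + t * (e i : ℂ))
      (MvPolynomial.map (algebraMap ℝ ℂ) p) = 0 → t.im = 0

/-- The homogenization `f_H(z₁,…,z_{n+1}) = z_{n+1}^d f(z₁/z_{n+1},…,zₙ/z_{n+1})` of a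
polynomial `f` of total degree at most `d`. -/
noncomputable def homogenization {n : ℕ} (f : MvPolynomial (Fin n) ℝ) (d : ℕ) :
    MvPolynomial (Fin (n + 1)) ℝ :=
  ∑ α ∈ f.support,
    MvPolynomial.monomial
      (Finsupp.mapDomain Fin.castSucc α +
        Finsupp.single (Fin.last n) (d - α.sum fun _ m => m)) (f.coeff α)


namespace Stmt7Aux

variable {m : ℕ}

lemma sum_univ_eq_degree (α : Fin m →₀ ℕ) : ∑ i, α i = α.degree :=
  (Finset.sum_subset (Finset.subset_univ _)
    (fun i _ hi => Finsupp.notMem_support_iff.mp hi)).symm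

lemma mem_support_degree {R : Type*} [CommSemiring R] {q : MvPolynomial (Fin m) R} {d : ℕ}
    (hq : q.IsHomogeneous d) {β : Fin m →₀ ℕ} (hβ : β ∈ q.support) : β.degree = d := by
  by_contra hne
  exact (mem_support_iff.mp hβ) (hq.coeff_eq_zero hne)

lemma eval_smul_of_isHomogeneous {R : Type*} [CommSemiring R] {q : MvPolynomial (Fin m) R} {d : ℕ}
    (hq : q.IsHomogeneous d) (c : R) (z : Fin m → R) :
    eval (fun i => c * z i) q = c ^ d * eval z q := by
  rw [eval_eq', eval_eq', Finset.mul_sum]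
  refine Finset.sum_congr rfl fun β hβ => ?_
  have hdeg : ∑ i, β i = d := by rw [sum_univ_eq_degree, mem_support_degree hq hβ]
  calc coeff β q * ∏ i, (c * z i) ^ β i
      = coeff β q * ((∏ i, c ^ β i) * ∏ i, z i ^ β i) := by
        rw [← Finset.prod_mul_distrib]; simp [mul_pow]
    _ = c ^ d * (coeff β q * ∏ i, z i ^ β i) := by
        rw [Finset.prod_pow_eq_pow_sum, hdeg]; ring

/-- The univariate polynomial `t ↦ q(c + t v)`. -/
noncomputable def linePoly (c v : Fin m → ℂ) (q : MvPolynomial (Fin m) ℂ) : Polynomial ℂ :=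
  eval₂ Polynomial.C (fun i => Polynomial.C (c i) + Polynomial.X * Polynomial.C (v i)) q

lemma linePoly_eval (c v : Fin m → ℂ) (q : MvPolynomial (Fin m) ℂ) (t : ℂ) :
    (linePoly c v q).eval t = eval (fun i => c i + t * v i) q := by
  have h := MvPolynomial.eval₂_comp_left (Polynomial.evalRingHom t) Polynomial.C
    (fun i => Polynomial.C (c i) + Polynomial.X * Polynomial.C (v i)) q
  have h2 : (Polynomial.evalRingHom t).comp (Polynomial.C : ℂ →+* Polynomial ℂ) = RingHom.id ℂ := by
    ext a; simp
  rw [linePoly]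
  calc (Polynomial.eval t) (eval₂ Polynomial.C _ q)
      = (Polynomial.evalRingHom t) (eval₂ Polynomial.C _ q) := rfl
    _ = eval₂ (RingHom.id ℂ) (fun i => c i + t * v i) q := by
        rw [h, h2]; congr 1; funext i
        simp only [Function.comp_apply, Polynomial.coe_evalRingHom, Polynomial.eval_add,
          Polynomial.eval_C, Polynomial.eval_mul, Polynomial.eval_X]
    _ = eval (fun i => c i + t * v i) q := rfl

lemma natDegree_linear_le (a b : ℂ) :
    (Polynomial.C a + Polynomial.X * Polynomial.C b).natDegree ≤ 1 := by
  refine le_trans (Polynomial.natDegree_add_le _ _) ?_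
  simp only [Polynomial.natDegree_C, max_le_iff]
  exact ⟨Nat.zero_le 1, le_trans Polynomial.natDegree_mul_le (by simp)⟩

lemma natDegree_pow_linear_le (a b : ℂ) (k : ℕ) :
    ((Polynomial.C a + Polynomial.X * Polynomial.C b) ^ k).natDegree ≤ k := by
  refine le_trans Polynomial.natDegree_pow_le ?_
  calc k * (Polynomial.C a + Polynomial.X * Polynomial.C b).natDegree ≤ k * 1 :=
        Nat.mul_le_mul_left _ (natDegree_linear_le a b)
    _ = k := Nat.mul_one k

lemma coeff_pow_linear (a b : ℂ) (k : ℕ) :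
    ((Polynomial.C a + Polynomial.X * Polynomial.C b) ^ k).coeff k = b ^ k := by
  induction k with
  | zero => simp
  | succ k ih =>
    rw [pow_succ, Polynomial.coeff_mul_add_eq_of_natDegree_le (natDegree_pow_linear_le a b k)
      (natDegree_linear_le a b), ih]
    have h1 : (Polynomial.C a + Polynomial.X * Polynomial.C b).coeff 1 = b := by
      simp [Polynomial.coeff_add]
    rw [h1, pow_succ]

lemma coeff_prod_of_natDegree_le' {ι : Type*} (s : Finset ι) (g : ι → Polynomial ℂ) (f : ι → ℕ)
    (h : ∀ i ∈ s, (g i).natDegree ≤ f i) :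
    (∏ i ∈ s, g i).coeff (∑ i ∈ s, f i) = ∏ i ∈ s, (g i).coeff (f i) := by
  induction s using Finset.cons_induction with
  | empty => simp
  | cons a s ha ih =>
    rw [Finset.prod_cons, Finset.sum_cons, Finset.prod_cons,
      Polynomial.coeff_mul_add_eq_of_natDegree_le (h a (Finset.mem_cons_self a s))
      (le_trans (Polynomial.natDegree_prod_le s g)
        (Finset.sum_le_sum fun i hi => h i (Finset.mem_cons_of_mem hi))),
      ih fun i hi => h i (Finset.mem_cons_of_mem hi)]

lemma linePoly_as_sum (c v : Fin m → ℂ) (q : MvPolynomial (Fin m) ℂ) :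
    linePoly c v q = ∑ β ∈ q.support, Polynomial.C (coeff β q) *
      ∏ i ∈ β.support, (Polynomial.C (c i) + Polynomial.X * Polynomial.C (v i)) ^ β i := by
  conv_lhs => rw [linePoly, MvPolynomial.as_sum q]
  rw [MvPolynomial.eval₂_sum]
  refine Finset.sum_congr rfl fun β hβ => ?_
  rw [MvPolynomial.eval₂_monomial]
  rfl

lemma linePoly_natDegree_le {q : MvPolynomial (Fin m) ℂ} {d : ℕ} (hq : q.IsHomogeneous d)
    (c v : Fin m → ℂ) : (linePoly c v q).natDegree ≤ d := by
  rw [linePoly_as_sum]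
  refine Polynomial.natDegree_sum_le_of_forall_le _ _ fun β hβ => ?_
  refine le_trans Polynomial.natDegree_mul_le ?_
  rw [Polynomial.natDegree_C, zero_add]
  refine le_trans (Polynomial.natDegree_prod_le _ _) ?_
  refine le_trans (Finset.sum_le_sum fun i _ => natDegree_pow_linear_le (c i) (v i) (β i)) ?_
  rw [← Finsupp.degree_apply, mem_support_degree hq hβ]

lemma linePoly_coeff_top {q : MvPolynomial (Fin m) ℂ} {d : ℕ} (hq : q.IsHomogeneous d)
    (c v : Fin m → ℂ) : (linePoly c v q).coeff d = eval v q := by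
  rw [linePoly_as_sum, Polynomial.finset_sum_coeff, eval_eq]
  refine Finset.sum_congr rfl fun β hβ => ?_
  rw [Polynomial.coeff_C_mul]
  have hd : d = ∑ i ∈ β.support, β i := (mem_support_degree hq hβ).symm
  rw [hd, coeff_prod_of_natDegree_le' _ _ _ fun i _ => natDegree_pow_linear_le (c i) (v i) (β i)]
  congr 1
  exact Finset.prod_congr rfl fun i _ => coeff_pow_linear (c i) (v i) (β i)

lemma exists_root_near (P : Polynomial ℂ) {d : ℕ} (hd : P.natDegree = d) (hd1 : 0 < d)
    {z : ℂ} {ε : ℝ} (hε : 0 < ε) (hlt : ‖P.eval z‖ < ‖P.leadingCoeff‖ * ε ^ d) :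
    ∃ r : ℂ, P.eval r = 0 ∧ ‖z - r‖ < ε := by
  classical
  have hP0 : P ≠ 0 := by
    rintro rfl
    simp at hlt
  have hsplit : P.Splits := IsAlgClosed.splits P
  have hcard : Multiset.card P.roots = d := by
    have := hsplit.natDegree_eq_card_roots
    rw [hd] at this
    exact this.symm
  have hne : P.roots ≠ 0 := by
    intro h0
    rw [h0] at hcard
    simp at hcard
    omega
  obtain ⟨r0, hr0mem, hr0min⟩ := Finset.exists_min_image P.roots.toFinset
    (fun r => ‖z - r‖) (Multiset.toFinset_nonempty.mpr hne)
  rw [Multiset.mem_toFinset] at hr0mem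
  refine ⟨r0, Polynomial.isRoot_of_mem_roots hr0mem, ?_⟩
  have heq : P.eval z = P.leadingCoeff * (P.roots.map (fun r => z - r)).prod := by
    conv_lhs => rw [hsplit.eq_prod_roots]
    rw [Polynomial.eval_mul, Polynomial.eval_C, Polynomial.eval_multiset_prod, Multiset.map_map]
    refine congr_arg _ (congr_arg _ (Multiset.map_congr rfl fun r _ => by simp))
  have hprodge : ‖z - r0‖₊ ^ d ≤ ((P.roots.map (fun r => z - r)).map (fun w => ‖w‖₊)).prod := by
    rw [Multiset.map_map]
    have h1 : (P.roots.map fun _ => ‖z - r0‖₊).prod ≤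
        (P.roots.map ((fun w => ‖w‖₊) ∘ fun r => z - r)).prod := by
      refine Multiset.prod_map_le_prod_map _ _ fun r hr => ?_
      have := hr0min r (Multiset.mem_toFinset.mpr hr)
      exact_mod_cast this
    rwa [Multiset.map_const', Multiset.prod_replicate, hcard] at h1
  have hnorm : ‖P.eval z‖₊ =
      ‖P.leadingCoeff‖₊ * ((P.roots.map (fun r => z - r)).map (fun w => ‖w‖₊)).prod := by
    rw [heq, nnnorm_mul]
    congr 1
    exact map_multiset_prod (nnnormHom.toMonoidHom : ℂ →* NNReal) _
  have hkey : ‖P.leadingCoeff‖ * ‖z - r0‖ ^ d ≤ ‖P.eval z‖ := by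
    have h2 := mul_le_mul_right hprodge ‖P.leadingCoeff‖₊
    rw [← hnorm] at h2
    calc ‖P.leadingCoeff‖ * ‖z - r0‖ ^ d = ((‖P.leadingCoeff‖₊ * ‖z - r0‖₊ ^ d : NNReal) : ℝ) := by
          push_cast; rfl
      _ ≤ ((‖P.eval z‖₊ : NNReal) : ℝ) := by exact_mod_cast h2
      _ = ‖P.eval z‖ := rfl
  have hlead : 0 < ‖P.leadingCoeff‖ := by
    rw [norm_pos_iff]
    exact Polynomial.leadingCoeff_ne_zero.mpr hP0
  have hpow : ‖z - r0‖ ^ d < ε ^ d := by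
    have h3 := lt_of_le_of_lt hkey hlt
    exact lt_of_mul_lt_mul_left h3 hlead.le
  exact lt_of_pow_lt_pow_left₀ d hε.le hpow

lemma eval_coe_real (p : MvPolynomial (Fin m) ℝ) (v : Fin m → ℝ) :
    eval (fun i => ((v i : ℝ) : ℂ)) (MvPolynomial.map (algebraMap ℝ ℂ) p) =
      ((eval v p : ℝ) : ℂ) := by
  rw [MvPolynomial.eval_map]
  have h := MvPolynomial.eval₂_comp_left (algebraMap ℝ ℂ) (RingHom.id ℝ) v p
  calc eval₂ (algebraMap ℝ ℂ) (fun i => ((v i : ℝ) : ℂ)) p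
      = eval₂ ((algebraMap ℝ ℂ).comp (RingHom.id ℝ)) ((algebraMap ℝ ℂ) ∘ v) p := by
        rw [RingHom.comp_id]
        congr 1
    _ = (algebraMap ℝ ℂ) (eval₂ (RingHom.id ℝ) v p) := h.symm
    _ = ((eval v p : ℝ) : ℂ) := rfl

lemma eval_conj (p : MvPolynomial (Fin m) ℝ) (z : Fin m → ℂ) :
    eval (fun i => (starRingEnd ℂ) (z i)) (MvPolynomial.map (algebraMap ℝ ℂ) p) =
      (starRingEnd ℂ) (eval z (MvPolynomial.map (algebraMap ℝ ℂ) p)) := by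
  rw [MvPolynomial.eval_map, MvPolynomial.eval_map]
  rw [MvPolynomial.eval₂_comp_left (starRingEnd ℂ) (algebraMap ℝ ℂ) z p]
  congr 1
  ext r
  simp [Complex.conj_ofReal]

lemma continuous_evalC (q : MvPolynomial (Fin m) ℂ) {X : Type*} [TopologicalSpace X]
    (g : X → (Fin m → ℂ)) (hg : Continuous g) :
    Continuous fun x => eval (g x) q :=
  (MvPolynomial.continuous_eval q).comp hg

lemma continuous_evalR (q : MvPolynomial (Fin m) ℝ) {X : Type*} [TopologicalSpace X]
    (g : X → (Fin m → ℝ)) (hg : Continuous g) :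
    Continuous fun x => eval (g x) q :=
  (MvPolynomial.continuous_eval q).comp hg


set_option maxHeartbeats 1000000 in
lemma mainA {d : ℕ} {p : MvPolynomial (Fin m) ℝ} (hp : p.IsHomogeneous d) (hd : 0 < d)
    {e e' : Fin m → ℝ}
    (hlead : ∀ l : ℝ, l ∈ Set.Icc (0:ℝ) 1 → eval (fun i => l * e i + (1 - l) * e' i) p ≠ 0)
    (hhyp2 : ∀ (x : Fin m → ℝ) (t : ℂ),
      eval (fun i => (x i : ℂ) + t * (e i : ℂ)) (MvPolynomial.map (algebraMap ℝ ℂ) p) = 0 →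
      t.im = 0)
    (x : Fin m → ℝ) :
    ∀ t : ℂ, 0 ≤ t.im →
      eval (fun i => (x i : ℂ) + Complex.I * (e i : ℂ) + t * (e' i : ℂ))
        (MvPolynomial.map (algebraMap ℝ ℂ) p) ≠ 0 := by
  classical
  set pC := MvPolynomial.map (algebraMap ℝ ℂ) p with hpCdef
  have hpC : pC.IsHomogeneous d := hp.map _
  set v : ℝ → (Fin m → ℝ) := fun l i => l * e i + (1 - l) * e' i with hvdef
  set xc : Fin m → ℂ := fun i => (x i : ℂ) + Complex.I * (e i : ℂ) with hxcdef
  set w : ℝ → (Fin m → ℂ) := fun l i => ((v l i : ℝ) : ℂ) with hwdef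
  set E : ℝ → ℂ → ℂ := fun l t => eval (fun i => xc i + t * w l i) pC with hEdef
  have hPeval : ∀ l t, (linePoly xc (w l) pC).eval t = E l t := fun l t => linePoly_eval _ _ _ _
  have hPcoeff : ∀ l, (linePoly xc (w l) pC).coeff d = ((eval (v l) p : ℝ) : ℂ) := by
    intro l; rw [linePoly_coeff_top hpC]; exact eval_coe_real p (v l)
  -- continuity of E
  have hEcont : Continuous fun q : ℝ × ℂ => E q.1 q.2 := by
    rw [hEdef]
    refine continuous_evalC pC _ ?_
    refine continuous_pi fun i => ?_
    refine continuous_const.add (continuous_snd.mul ?_)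
    rw [hwdef, hvdef]
    exact Complex.continuous_ofReal.comp
      ((continuous_fst.mul continuous_const).add
        ((continuous_const.sub continuous_fst).mul continuous_const))
  -- no real roots, for any l
  have hnoreal : ∀ (l : ℝ) (τ : ℝ), E l ((τ : ℝ) : ℂ) ≠ 0 := by
    intro l τ h0
    have harg : (fun i => xc i + ((τ : ℝ) : ℂ) * w l i) =
        fun i => (((x i + τ * v l i : ℝ)) : ℂ) + Complex.I * ((e i : ℝ) : ℂ) := by
      funext i
      rw [hxcdef, hwdef, hvdef]
      push_cast
      ring
    rw [hEdef] at h0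
    simp only at h0
    rw [harg] at h0
    have := hhyp2 (fun i => x i + τ * v l i) Complex.I h0
    rw [Complex.I_im] at this
    norm_num at this
  -- uniform bound on roots
  have hGcont : Continuous fun q : ℝ × (Fin m → ℂ) => eval (fun i => q.2 i + w q.1 i) pC := by
    refine continuous_evalC pC _ ?_
    refine continuous_pi fun i => ?_
    refine (continuous_apply i).comp (continuous_snd) |>.add ?_
    rw [hwdef, hvdef]
    exact Complex.continuous_ofReal.comp
      ((continuous_fst.mul continuous_const).add
        ((continuous_const.sub continuous_fst).mul continuous_const))
  obtain ⟨δ, hδ, hthick⟩ : ∃ δ, 0 < δ ∧ Metric.thickening δ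
      ((Set.Icc (0:ℝ) 1) ×ˢ ({0} : Set (Fin m → ℂ))) ⊆
      {q : ℝ × (Fin m → ℂ) | eval (fun i => q.2 i + w q.1 i) pC ≠ 0} := by
    refine IsCompact.exists_thickening_subset_open (isCompact_Icc.prod isCompact_singleton)
      (IsOpen.preimage hGcont (isOpen_ne : IsOpen {y : ℂ | y ≠ 0})) ?_
    rintro ⟨l, z⟩ ⟨hl, hz⟩
    simp only [Set.mem_singleton_iff] at hz
    subst hz
    show eval (fun i => (0 : Fin m → ℂ) i + w l i) pC ≠ 0
    have : (fun i => (0 : Fin m → ℂ) i + w l i) = fun i => ((v l i : ℝ) : ℂ) := by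
      funext i; rw [hwdef]; simp
    rw [this, eval_coe_real p (v l)]
    exact_mod_cast hlead l hl
  set M : ℝ := ‖xc‖ / δ with hMdef
  have hM0 : 0 ≤ M := div_nonneg (norm_nonneg _) hδ.le
  have hM : ∀ l ∈ Set.Icc (0:ℝ) 1, ∀ t : ℂ, E l t = 0 → ‖t‖ ≤ M := by
    intro l hl t h0
    rcases eq_or_ne t 0 with rfl | ht
    · simpa using hM0
    · have h1 : eval (fun i => t⁻¹ * (xc i + t * w l i)) pC = 0 := by
        rw [eval_smul_of_isHomogeneous hpC]
        rw [hEdef] at h0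
        simp only at h0
        rw [h0, mul_zero]
      have h2 : (fun i => t⁻¹ * (xc i + t * w l i)) = fun i => (t⁻¹ • xc) i + w l i := by
        funext i
        simp only [Pi.smul_apply, smul_eq_mul]
        field_simp
      rw [h2] at h1
      have h3 : (l, t⁻¹ • xc) ∉ Metric.thickening δ
          ((Set.Icc (0:ℝ) 1) ×ˢ ({0} : Set (Fin m → ℂ))) := by
        intro hmem
        exact (hthick hmem) h1
      have h4 : ¬ (dist ((l, t⁻¹ • xc) : ℝ × (Fin m → ℂ)) (l, (0 : Fin m → ℂ)) < δ) := by
        intro hdist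
        exact h3 (Metric.mem_thickening_iff.mpr ⟨(l, 0), ⟨hl, rfl⟩, hdist⟩)
      rw [Prod.dist_eq] at h4
      simp only [dist_self, dist_zero_right] at h4
      push_neg at h4
      rw [max_eq_right (norm_nonneg _)] at h4
      have h5 : δ ≤ ‖t⁻¹ • xc‖ := h4
      rw [norm_smul, norm_inv] at h5
      rw [hMdef, le_div_iff₀ hδ]
      have ht' : 0 < ‖t‖ := norm_pos_iff.mpr ht
      have h6 := mul_le_mul_of_nonneg_left h5 ht'.le
      rwa [← mul_assoc, mul_inv_cancel₀ ht'.ne', one_mul] at h6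
  -- the good set
  set good : ℝ → Prop := fun l => ∀ t : ℂ, 0 ≤ t.im → E l t ≠ 0 with hgooddef
  have h1good : good 1 := by
    intro t him h0
    have harg : (fun i => xc i + t * w 1 i) =
        fun i => ((x i : ℝ) : ℂ) + (Complex.I + t) * ((e i : ℝ) : ℂ) := by
      funext i
      rw [hxcdef, hwdef, hvdef]
      push_cast
      ring
    rw [hEdef] at h0
    simp only at h0
    rw [harg] at h0
    have := hhyp2 x (Complex.I + t) h0
    rw [Complex.add_im, Complex.I_im] at this
    linarith
  -- bad is open
  have hbadopen : ∀ l ∈ Set.Icc (0:ℝ) 1, ¬ good l →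
      ∃ ε > 0, ∀ l', |l' - l| < ε → ¬ good l' := by
    intro l hl hbad
    obtain ⟨t0, him0, h0⟩ : ∃ t : ℂ, 0 ≤ t.im ∧ E l t = 0 := by
      by_contra hne
      push_neg at hne
      exact hbad hne
    have him : 0 < t0.im := by
      rcases lt_or_eq_of_le him0 with h | h
      · exact h
      · exfalso
        have ht0 : t0 = ((t0.re : ℝ) : ℂ) := by
          apply Complex.ext <;> simp [← h]
        rw [ht0] at h0
        exact hnoreal l t0.re h0
    have hLne : eval (v l) p ≠ 0 := hlead l hl
    have hLpos : 0 < ‖eval (v l) p‖ := norm_pos_iff.mpr hLne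
    have hc1 : ContinuousAt (fun l' => E l' t0) l := by
      have : (fun l' => E l' t0) = (fun q : ℝ × ℂ => E q.1 q.2) ∘ fun l' => (l', t0) := rfl
      rw [this]
      exact (hEcont.comp (continuous_id.prodMk continuous_const)).continuousAt
    have hc2 : ContinuousAt (fun l' => eval (v l') p) l := by
      refine (continuous_evalR p (fun l' => v l') ?_).continuousAt
      rw [hvdef]
      exact continuous_pi fun i =>
        (continuous_id.mul continuous_const).add
          ((continuous_const.sub continuous_id).mul continuous_const)
    have hev1 : ∀ᶠ l' in nhds l, ‖E l' t0‖ < (‖eval (v l) p‖ / 2) * t0.im ^ d := by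
      have hto : Filter.Tendsto (fun l' => ‖E l' t0‖) (nhds l) (nhds ‖E l t0‖) :=
        (hc1.norm).tendsto
      rw [h0] at hto
      simp only [norm_zero] at hto
      exact hto.eventually_lt_const (by positivity)
    have hev2 : ∀ᶠ l' in nhds l, ‖eval (v l) p‖ / 2 < ‖eval (v l') p‖ := by
      have hto : Filter.Tendsto (fun l' => ‖eval (v l') p‖) (nhds l)
          (nhds ‖eval (v l) p‖) := (hc2.norm).tendsto
      exact hto.eventually_const_lt (by linarith)
    obtain ⟨ε, hε, hball⟩ := Metric.eventually_nhds_iff.mp (hev1.and hev2)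
    refine ⟨ε, hε, fun l' hl' hgood' => ?_⟩
    obtain ⟨hb1, hb2⟩ := hball (show dist l' l < ε by rwa [Real.dist_eq])
    have hL'ne : eval (v l') p ≠ 0 := by
      intro hz
      rw [hz] at hb2
      simp only [norm_zero] at hb2
      linarith [norm_nonneg (eval (v l) p)]
    have hcoeffne : (linePoly xc (w l') pC).coeff d ≠ 0 := by
      rw [hPcoeff l']
      exact_mod_cast hL'ne
    have hdeg : (linePoly xc (w l') pC).natDegree = d :=
      le_antisymm (linePoly_natDegree_le hpC _ _) (Polynomial.le_natDegree_of_ne_zero hcoeffne)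
    have hleadeq : (linePoly xc (w l') pC).leadingCoeff = ((eval (v l') p : ℝ) : ℂ) := by
      rw [Polynomial.leadingCoeff, hdeg, hPcoeff l']
    have hltarget : ‖(linePoly xc (w l') pC).eval t0‖ <
        ‖(linePoly xc (w l') pC).leadingCoeff‖ * t0.im ^ d := by
      rw [hPeval l' t0, hleadeq]
      have : ‖((eval (v l') p : ℝ) : ℂ)‖ = ‖eval (v l') p‖ := Complex.norm_real _
      rw [this]
      calc ‖E l' t0‖ < (‖eval (v l) p‖ / 2) * t0.im ^ d := hb1
        _ ≤ ‖eval (v l') p‖ * t0.im ^ d := by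
            have : (0:ℝ) ≤ t0.im ^ d := by positivity
            nlinarith
    obtain ⟨r, hr0, hrnear⟩ := exists_root_near _ hdeg hd him hltarget
    have hrim : 0 < r.im := by
      have h6 : (t0 - r).im ≤ |(t0 - r).im| := le_abs_self _
      have h7 : |(t0 - r).im| ≤ ‖t0 - r‖ := Complex.abs_im_le_norm _
      have h8 : ‖t0 - r‖ = ‖t0 - r‖ := rfl
      rw [Complex.sub_im] at h6
      linarith [lt_of_le_of_lt (le_trans h6 (h8 ▸ h7)) hrnear]
    exact hgood' r hrim.le (by rw [← hPeval l' r]; exact hr0)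
  -- good is open (within Icc)
  have hgoodopen : ∀ l ∈ Set.Icc (0:ℝ) 1, good l →
      ∃ ε > 0, ∀ l' ∈ Set.Icc (0:ℝ) 1, |l' - l| < ε → good l' := by
    intro l hl hgood
    by_contra hcon
    push_neg at hcon
    have hseq : ∀ k : ℕ, ∃ l', l' ∈ Set.Icc (0:ℝ) 1 ∧ |l' - l| < 1/(k+1) ∧
        ∃ t : ℂ, 0 ≤ t.im ∧ E l' t = 0 := by
      intro k
      obtain ⟨l', hl'1, hl'2, hl'3⟩ := hcon (1/(k+1)) (by positivity)
      obtain ⟨t, ht1, ht2⟩ : ∃ t : ℂ, 0 ≤ t.im ∧ E l' t = 0 := by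
        by_contra hne
        push_neg at hne
        exact hl'3 hne
      exact ⟨l', hl'1, hl'2, t, ht1, ht2⟩
    choose u hu1 hu2 t ht1 ht2 using hseq
    have htb : ∀ k, t k ∈ Metric.closedBall (0:ℂ) M := by
      intro k
      rw [Metric.mem_closedBall, dist_zero_right]
      exact hM (u k) (hu1 k) _ (ht2 k)
    obtain ⟨a, _, φ, hφ, hta⟩ := tendsto_subseq_of_bounded Metric.isBounded_closedBall htb
    have hul : Filter.Tendsto (fun k => u (φ k)) Filter.atTop (nhds l) := by
      rw [tendsto_iff_dist_tendsto_zero]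
      refine squeeze_zero (fun k => dist_nonneg) (fun k => ?_) tendsto_one_div_add_atTop_nhds_zero_nat
      rw [Real.dist_eq]
      refine le_trans (hu2 (φ k)).le ?_
      have hka : k ≤ φ k := hφ.le_apply
      have hcast : (k : ℝ) ≤ (φ k : ℝ) := Nat.cast_le.mpr hka
      exact one_div_le_one_div_of_le (by positivity) (by linarith)
    have hpair : Filter.Tendsto (fun k => ((u (φ k) : ℝ), t (φ k))) Filter.atTop
        (nhds (l, a)) := hul.prodMk_nhds hta
    have hEa : E l a = 0 := by
      have h5 := (hEcont.tendsto (l, a)).comp hpair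
      have h6 : Filter.Tendsto (fun _ : ℕ => (0:ℂ)) Filter.atTop
          (nhds ((fun q : ℝ × ℂ => E q.1 q.2) (l, a))) := by
        refine h5.congr fun k => ?_
        show E (u (φ k)) (t (φ k)) = (0:ℂ)
        exact ht2 (φ k)
      exact (tendsto_nhds_unique tendsto_const_nhds h6).symm
    have haim : 0 ≤ a.im := by
      refine ge_of_tendsto ((Complex.continuous_im.tendsto a).comp hta) ?_
      exact Filter.Eventually.of_forall fun k => ht1 (φ k)
    exact hgood a haim hEa
  -- connectedness
  haveI : PreconnectedSpace (Set.Icc (0:ℝ) 1) := Subtype.preconnectedSpace isPreconnected_Icc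
  set S : Set (Set.Icc (0:ℝ) 1) := {y | good (y : ℝ)} with hSdef
  have hSopen : IsOpen S := by
    rw [Metric.isOpen_iff]
    intro y hy
    obtain ⟨ε, hε, h⟩ := hgoodopen y y.2 hy
    refine ⟨ε, hε, fun z hz => ?_⟩
    rw [Metric.mem_ball, Subtype.dist_eq, Real.dist_eq] at hz
    exact h z z.2 hz
  have hSclosed : IsClosed S := by
    rw [← isOpen_compl_iff, Metric.isOpen_iff]
    intro y hy
    obtain ⟨ε, hε, h⟩ := hbadopen y y.2 hy
    refine ⟨ε, hε, fun z hz => ?_⟩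
    rw [Metric.mem_ball, Subtype.dist_eq, Real.dist_eq] at hz
    exact h z hz
  have hSne : S.Nonempty := ⟨⟨1, by norm_num⟩, h1good⟩
  have hSuniv : S = Set.univ := IsClopen.eq_univ ⟨hSclosed, hSopen⟩ hSne
  have h0good : good 0 := by
    have : (⟨0, by norm_num⟩ : Set.Icc (0:ℝ) 1) ∈ S := by rw [hSuniv]; trivial
    exact this
  -- conclude
  intro s hs hz
  refine h0good s hs ?_
  rw [hEdef]
  simp only
  have harg : (fun i => xc i + s * w 0 i) =
      fun i => ((x i : ℝ) : ℂ) + Complex.I * ((e i : ℝ) : ℂ) + s * ((e' i : ℝ) : ℂ) := by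
    funext i
    rw [hxcdef, hwdef, hvdef]
    push_cast
    ring
  rw [harg]
  exact hz


set_option maxHeartbeats 1000000 in
lemma mainB {d : ℕ} {p : MvPolynomial (Fin m) ℝ} (hp : p.IsHomogeneous d) (hd : 0 < d)
    {e e' : Fin m → ℝ}
    (hlead : ∀ l : ℝ, l ∈ Set.Icc (0:ℝ) 1 → eval (fun i => l * e i + (1 - l) * e' i) p ≠ 0)
    (hhyp2 : ∀ (x : Fin m → ℝ) (t : ℂ),
      eval (fun i => (x i : ℂ) + t * (e i : ℂ)) (MvPolynomial.map (algebraMap ℝ ℂ) p) = 0 →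
      t.im = 0) :
    ∀ (x : Fin m → ℝ) (t : ℂ),
      eval (fun i => (x i : ℂ) + t * (e' i : ℂ)) (MvPolynomial.map (algebraMap ℝ ℂ) p) = 0 →
      t.im = 0 := by
  classical
  set pC := MvPolynomial.map (algebraMap ℝ ℂ) p with hpCdef
  have hpC : pC.IsHomogeneous d := hp.map _
  have hle' : eval e' p ≠ 0 := by
    have h0 := hlead 0 (by norm_num)
    have heq : (fun i => (0:ℝ) * e i + (1 - 0) * e' i) = e' := by funext i; ring_nf
    rwa [heq] at h0
  -- scaled version of mainA
  have hscaled : ∀ (ε : ℝ), 0 < ε → ∀ (x : Fin m → ℝ) (t : ℂ), 0 ≤ t.im →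
      eval (fun i => (x i : ℂ) + (ε : ℂ) * Complex.I * (e i : ℂ) + t * (e' i : ℂ)) pC ≠ 0 := by
    intro ε hε x t him h0
    have hεC : ((ε : ℝ) : ℂ) ≠ 0 := by exact_mod_cast hε.ne'
    set z : Fin m → ℂ := fun i => ((x i / ε : ℝ) : ℂ) + Complex.I * (e i : ℂ) +
      (((ε⁻¹ : ℝ) : ℂ) * t) * (e' i : ℂ) with hzdef
    have harg : (fun i => ((ε : ℝ) : ℂ) * z i) =
        fun i => (x i : ℂ) + (ε : ℂ) * Complex.I * (e i : ℂ) + t * (e' i : ℂ) := by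
      funext i
      rw [hzdef]
      push_cast
      field_simp
    have h1 : eval (fun i => ((ε : ℝ) : ℂ) * z i) pC = 0 := by rw [harg]; exact h0
    rw [eval_smul_of_isHomogeneous hpC] at h1
    have h2 : eval z pC = 0 := by
      rcases mul_eq_zero.mp h1 with h | h
      · exact absurd h (pow_ne_zero d hεC)
      · exact h
    have him' : 0 ≤ (((ε⁻¹ : ℝ) : ℂ) * t).im := by
      rw [Complex.mul_im]
      simp only [Complex.ofReal_re, Complex.ofReal_im, zero_mul, add_zero]
      positivity
    exact mainA hp hd hlead hhyp2 (fun i => x i / ε) _ him' h2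
  -- roots in the open upper half plane are impossible
  have key : ∀ (x : Fin m → ℝ) (t : ℂ), 0 < t.im →
      eval (fun i => (x i : ℂ) + t * (e' i : ℂ)) pC ≠ 0 := by
    intro x t him h0
    set F : ℝ → ℂ := fun ε =>
      eval (fun i => (x i : ℂ) + ((ε : ℝ) : ℂ) * Complex.I * (e i : ℂ) + t * (e' i : ℂ)) pC
      with hFdef
    have hcont : ContinuousAt F 0 := by
      rw [hFdef]
      refine (continuous_evalC pC _ ?_).continuousAt
      refine continuous_pi fun i => ?_
      exact (continuous_const.add ((Complex.continuous_ofReal.mul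
        continuous_const).mul continuous_const)).add continuous_const
    have hF0 : F 0 = 0 := by
      rw [hFdef]
      simp only
      have heq : (fun i => (x i : ℂ) + (((0:ℝ) : ℝ) : ℂ) * Complex.I * (e i : ℂ) +
          t * (e' i : ℂ)) = fun i => (x i : ℂ) + t * (e' i : ℂ) := by
        funext i; push_cast; ring
      rw [heq]
      exact h0
    have hc2 : (0:ℝ) < ‖((eval e' p : ℝ) : ℂ)‖ * t.im ^ d := by
      have h1 : (0:ℝ) < ‖((eval e' p : ℝ) : ℂ)‖ := by
        rw [norm_pos_iff]
        exact_mod_cast hle'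
      positivity
    have hev : ∀ᶠ ε in nhds (0:ℝ), ‖F ε‖ < ‖((eval e' p : ℝ) : ℂ)‖ * t.im ^ d := by
      have hto := (hcont.norm).tendsto
      rw [hF0] at hto
      simp only [norm_zero] at hto
      exact hto.eventually_lt_const hc2
    obtain ⟨δ, hδ, hball⟩ := Metric.eventually_nhds_iff.mp hev
    set ε := δ / 2 with hεdef
    have hε : 0 < ε := by positivity
    have hFε : ‖F ε‖ < ‖((eval e' p : ℝ) : ℂ)‖ * t.im ^ d := by
      refine hball ?_
      rw [Real.dist_eq]
      rw [hεdef]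
      rw [sub_zero, abs_of_pos (by positivity)]
      linarith
    set P' := linePoly (fun i => (x i : ℂ) + ((ε : ℝ) : ℂ) * Complex.I * (e i : ℂ))
      (fun i => ((e' i : ℝ) : ℂ)) pC with hP'def
    have hcoeff : P'.coeff d = ((eval e' p : ℝ) : ℂ) := by
      rw [hP'def, linePoly_coeff_top hpC]
      exact eval_coe_real p e'
    have hcoeffne : P'.coeff d ≠ 0 := by
      rw [hcoeff]
      exact_mod_cast hle'
    have hdeg : P'.natDegree = d :=
      le_antisymm (linePoly_natDegree_le hpC _ _) (Polynomial.le_natDegree_of_ne_zero hcoeffne)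
    have hleadeq : P'.leadingCoeff = ((eval e' p : ℝ) : ℂ) := by
      rw [Polynomial.leadingCoeff, hdeg, hcoeff]
    have hPeval : ∀ s : ℂ, P'.eval s =
        eval (fun i => (x i : ℂ) + ((ε : ℝ) : ℂ) * Complex.I * (e i : ℂ) + s * (e' i : ℂ)) pC :=
      fun s => linePoly_eval _ _ _ _
    have hlt : ‖P'.eval t‖ < ‖P'.leadingCoeff‖ * t.im ^ d := by
      rw [hPeval t, hleadeq]
      exact hFε
    obtain ⟨r, hr0, hrnear⟩ := exists_root_near P' hdeg hd him hlt
    have hrim : 0 ≤ r.im := by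
      have h6 : (t - r).im ≤ |(t - r).im| := le_abs_self _
      have h7 : |(t - r).im| ≤ ‖t - r‖ := Complex.abs_im_le_norm _
      have h8 : ‖t - r‖ = ‖t - r‖ := rfl
      rw [Complex.sub_im] at h6
      have := lt_of_le_of_lt (le_trans h6 (h8 ▸ h7)) hrnear
      linarith
    refine hscaled ε hε x r hrim ?_
    rw [← hPeval r]
    exact hr0
  -- conclusion, using conjugation symmetry
  intro x t h0
  by_contra him
  rcases lt_or_gt_of_ne him with hlt | hgt
  · -- t.im < 0 : use the conjugate root
    have hconj := eval_conj p (fun i => (x i : ℂ) + t * ((e' i : ℝ) : ℂ))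
    have harg : (fun i => (starRingEnd ℂ) ((x i : ℂ) + t * ((e' i : ℝ) : ℂ))) =
        fun i => (x i : ℂ) + (starRingEnd ℂ) t * ((e' i : ℝ) : ℂ) := by
      funext i
      rw [map_add, map_mul, Complex.conj_ofReal, Complex.conj_ofReal]
    rw [harg] at hconj
    have h1 : eval (fun i => (x i : ℂ) + (starRingEnd ℂ) t * ((e' i : ℝ) : ℂ)) pC = 0 := by
      rw [hconj, h0, map_zero]
    exact key x ((starRingEnd ℂ) t) (by rw [Complex.conj_im]; linarith) h1
  · exact key x t hgt h0



lemma degree_add {k : ℕ} (a b : Fin k →₀ ℕ) : (a + b).degree = a.degree + b.degree := by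
  show ((a + b).sum fun _ e => e) = (a.sum fun _ e => e) + (b.sum fun _ e => e)
  exact Finsupp.sum_add_index' (fun _ => rfl) (fun _ _ _ => rfl)

lemma degree_single {k : ℕ} (x : Fin k) (c : ℕ) : (Finsupp.single x c).degree = c := by
  show ((Finsupp.single x c).sum fun _ e => e) = c
  exact Finsupp.sum_single_index rfl

lemma degree_mapDomain {k k' : ℕ} (g : Fin k → Fin k') (α : Fin k →₀ ℕ) :
    (Finsupp.mapDomain g α).degree = α.degree := by
  show ((Finsupp.mapDomain g α).sum fun _ e => e) = (α.sum fun _ e => e)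
  exact Finsupp.sum_mapDomain_index (fun _ => rfl) (fun _ _ _ => rfl)

lemma homogenization_isHomogeneous {n : ℕ} (f : MvPolynomial (Fin n) ℝ) :
    (homogenization f f.totalDegree).IsHomogeneous f.totalDegree := by
  refine MvPolynomial.IsHomogeneous.sum _ _ _ fun α hα => ?_
  refine isHomogeneous_monomial _ ?_
  have hle : (α.sum fun _ m => m) ≤ f.totalDegree := MvPolynomial.le_totalDegree hα
  rw [degree_add, degree_single, degree_mapDomain]
  have hdeg : α.degree = α.sum fun _ m => m := rfl
  omega

lemma homogenization_eval {n : ℕ} (f : MvPolynomial (Fin n) ℝ) (d : ℕ) (v : Fin (n+1) → ℝ) :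
    eval v (homogenization f d) = ∑ α ∈ f.support, f.coeff α *
      ((Finsupp.mapDomain Fin.castSucc α +
        Finsupp.single (Fin.last n) (d - α.sum fun _ m => m)).prod fun i k => v i ^ k) := by
  simp only [homogenization, map_sum, eval_monomial]

lemma homogenization_eval_pos {n : ℕ} {f : MvPolynomial (Fin n) ℝ}
    (hcoeff : ∀ α, 0 ≤ f.coeff α) (hne : f.support.Nonempty) {d : ℕ}
    (v : Fin (n+1) → ℝ) (hv : ∀ i, 0 < v i) : 0 < eval v (homogenization f d) := by
  rw [homogenization_eval]
  have hprod : ∀ α : Fin n →₀ ℕ, 0 < ((Finsupp.mapDomain Fin.castSucc α +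
      Finsupp.single (Fin.last n) (d - α.sum fun _ m => m)).prod fun i k => v i ^ k) := by
    intro α
    rw [Finsupp.prod]
    exact Finset.prod_pos fun i _ => pow_pos (hv i) _
  refine Finset.sum_pos' (fun α _ => mul_nonneg (hcoeff α) (hprod α).le) ?_
  obtain ⟨α0, hα0⟩ := hne
  exact ⟨α0, hα0, mul_pos (lt_of_le_of_ne (hcoeff α0)
    (Ne.symm (mem_support_iff.mp hα0))) (hprod α0)⟩


end Stmt7Aux

/-- If `f` has non-negative coefficients and its homogenization `f_H` (with `d` the total
degree of `f`) is hyperbolic with respect to some vector with non-negative coordinates,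
then `f_H` is hyperbolic with respect to every vector with strictly positive coordinates. -/
theorem stmt7 (n : ℕ) (f : MvPolynomial (Fin n) ℝ)
    (hcoeff : ∀ α, 0 ≤ f.coeff α)
    (e : Fin (n + 1) → ℝ) (he : ∀ i, 0 ≤ e i)
    (hhyp : IsHyperbolicWrt (homogenization f f.totalDegree) e) :
    ∀ e' : Fin (n + 1) → ℝ, (∀ i, 0 < e' i) →
      IsHyperbolicWrt (homogenization f f.totalDegree) e' := by
  intro e' he'
  obtain ⟨hev_e, hhyp2⟩ := hhyp
  have hp : (homogenization f f.totalDegree).IsHomogeneous f.totalDegree :=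
    Stmt7Aux.homogenization_isHomogeneous f
  have hsupp : f.support.Nonempty := by
    rcases Finset.eq_empty_or_nonempty f.support with h | h
    · exfalso
      apply hev_e
      simp [homogenization, h]
    · exact h
  have hpos : ∀ v : Fin (n+1) → ℝ, (∀ i, 0 < v i) →
      0 < eval v (homogenization f f.totalDegree) :=
    fun v hv => Stmt7Aux.homogenization_eval_pos hcoeff hsupp v hv
  have hlead : ∀ l : ℝ, l ∈ Set.Icc (0:ℝ) 1 →
      eval (fun i => l * e i + (1 - l) * e' i) (homogenization f f.totalDegree) ≠ 0 := by
    intro l hl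
    rcases eq_or_lt_of_le hl.2 with h1 | h1
    · have harg : (fun i => l * e i + (1 - l) * e' i) = e := by
        funext i; rw [h1]; ring
      rw [harg]
      exact hev_e
    · refine (hpos _ fun i => ?_).ne'
      have h2 : 0 ≤ l * e i := mul_nonneg hl.1 (he i)
      have h3 : 0 < (1 - l) * e' i := mul_pos (by linarith) (he' i)
      linarith
  constructor
  · exact (hpos e' he').ne'
  · rcases Nat.eq_zero_or_pos f.totalDegree with hd0 | hdpos
    · intro x t h0
      exfalso
      have hzC : ∀ z : Fin (n+1) → ℂ,
          eval z (MvPolynomial.map (algebraMap ℝ ℂ) (homogenization f f.totalDegree)) =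
          ((eval e (homogenization f f.totalDegree) : ℝ) : ℂ) := by
        intro z
        have h1 := Stmt7Aux.eval_smul_of_isHomogeneous (hp.map (algebraMap ℝ ℂ)) 0 z
        rw [show (0:ℂ) ^ f.totalDegree = 1 from by rw [hd0, pow_zero], one_mul] at h1
        have h2 := Stmt7Aux.eval_smul_of_isHomogeneous hp 0 e
        rw [show (0:ℝ) ^ f.totalDegree = 1 from by rw [hd0, pow_zero], one_mul] at h2
        have hz0 : (fun i => (0:ℂ) * z i) = fun i => (((0:ℝ) : ℝ) : ℂ) := by
          funext i; push_cast; ring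
        have he0 : (fun i => (0:ℝ) * e i) = fun _ => (0:ℝ) := by
          funext i; ring
        rw [hz0] at h1
        rw [he0] at h2
        rw [← h1, Stmt7Aux.eval_coe_real (homogenization f f.totalDegree) (fun _ => (0:ℝ)), ← h2]
      rw [hzC] at h0
      have : eval e (homogenization f f.totalDegree) = 0 := by exact_mod_cast h0
      exact hev_e this
    · exact Stmt7Aux.mainB hp hdpos hlead hhyp2
end

section
/- Let p(t) = Σ_{k=0}^n C(n,k) c_k t^k be a univariate real polynomial with non-negative coefficients and only real roots, where C(n,k) is the binomial coefficient. Then the sequence {c_k}_{k=0}^n is log-concave: c_k^2 ≥ c_{k−1} c_{k+1} for all 1 ≤ k ≤ n−1. -/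
open Polynomial

/-- A real polynomial all of whose complex roots are real has a full multiset of real roots. -/
lemma aux_rr_of_aeval (p : ℝ[X]) (h : ∀ z : ℂ, aeval z p = 0 → z.im = 0) :
    Multiset.card p.roots = p.natDegree := by
  have hp : p ≠ 0 := by
    intro h0
    have := h Complex.I (by simp [h0])
    simp [Complex.I_im] at this
  set f := algebraMap ℝ ℂ with hf
  have hinj : Function.Injective f := (algebraMap ℝ ℂ).injective
  have hq : p.map f ≠ 0 := (Polynomial.map_ne_zero_iff hinj).mpr hp
  have hsp : Multiset.card (p.map f).roots = (p.map f).natDegree :=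
    splits_iff_card_roots.mp (IsAlgClosed.splits _)
  have heq : (p.map f).roots = p.roots.map f := by
    refine Multiset.ext.mpr fun z => ?_
    by_cases hz : z.im = 0
    · have hzz : f z.re = z := Complex.ext (by simp [hf]) (by simp [hf, hz])
      rw [← hzz, count_roots, ← eq_rootMultiplicity_map hinj,
        Multiset.count_map_eq_count' f _ hinj, count_roots]
    · have h1 : z ∉ (p.map f).roots := by
        intro hmem
        exact hz (h z (by
          rw [aeval_def, eval₂_eq_eval_map]
          exact (mem_roots hq).mp hmem))
      have h2 : z ∉ p.roots.map f := by
        intro hmem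
        obtain ⟨x, -, rfl⟩ := Multiset.mem_map.mp hmem
        exact hz (by simp [hf])
      rw [Multiset.count_eq_zero_of_notMem h1, Multiset.count_eq_zero_of_notMem h2]
  calc Multiset.card p.roots = Multiset.card (p.roots.map f) := (Multiset.card_map _ _).symm
    _ = (p.map f).natDegree := by rw [← heq, hsp]
    _ = p.natDegree := natDegree_map f

/-- derivative preserves real-rootedness (with multiplicity count). -/
lemma aux_rr_derivative (p : ℝ[X]) (h : Multiset.card p.roots = p.natDegree) :
    Multiset.card (derivative p).roots = (derivative p).natDegree := by
  by_cases hd : derivative p = 0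
  · simp [hd]
  · have h1 := p.card_roots_le_derivative
    have h2 := (derivative p).card_roots'
    have h3 : (derivative p).natDegree ≤ p.natDegree - 1 := natDegree_derivative_le p
    have h4 : 1 ≤ p.natDegree := by
      by_contra h4
      push_neg at h4
      have : p = C (p.coeff 0) := eq_C_of_natDegree_le_zero (by omega)
      exact hd (by rw [this]; simp)
    omega

lemma aux_rr_iterate (p : ℝ[X]) (h : Multiset.card p.roots = p.natDegree) (m : ℕ) :
    Multiset.card (derivative^[m] p).roots = (derivative^[m] p).natDegree := by
  induction m with
  | zero => simpa
  | succ m ih =>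
    rw [Function.iterate_succ_apply']
    exact aux_rr_derivative _ ih

lemma aux_rr_reverse (p : ℝ[X]) (h : Multiset.card p.roots = p.natDegree) :
    Multiset.card p.reverse.roots = p.reverse.natDegree := by
  rw [← splits_iff_card_roots] at h ⊢
  by_cases hp : p = 0
  · simp [hp]
  · have hrev : p.reverse = (C p.leadingCoeff * (p.roots.map fun a => X - C a).prod).reverse := by
      rw [← h.eq_prod_roots]
    rw [hrev, reverse_mul_of_domain]
    refine Splits.mul ?_ ?_
    · exact Splits.of_natDegree_le_one
        ((reverse_natDegree_le _).trans (by simp [natDegree_C]))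
    · generalize p.roots = s
      induction s using Multiset.induction with
      | empty =>
        exact Splits.of_natDegree_le_one ((reverse_natDegree_le _).trans (by simp))
      | cons a s ih =>
        rw [Multiset.map_cons, Multiset.prod_cons, reverse_mul_of_domain]
        refine Splits.mul ?_ ih
        exact Splits.of_natDegree_le_one
          ((reverse_natDegree_le _).trans (by simp [natDegree_X_sub_C]))

lemma aux_descA (X : ℕ) : (X + 1).descFactorial X = Nat.factorial (X + 1) := by
  induction X with
  | zero => simp
  | succ X ih =>
    rw [Nat.succ_descFactorial_succ, ih]
    simp [Nat.factorial_succ]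

lemma aux_descB (X : ℕ) : 2 * (X + 2).descFactorial X = Nat.factorial (X + 2) := by
  induction X with
  | zero => simp [Nat.factorial]
  | succ X ih =>
    rw [show X + 1 + 2 = (X + 2) + 1 by ring, Nat.succ_descFactorial_succ,
      Nat.factorial_succ, ← ih]
    ring

lemma aux_disc (r : ℝ[X]) (hrr : Multiset.card r.roots = r.natDegree)
    (hdeg : r.natDegree ≤ 2) (h2 : r.coeff 2 ≠ 0) :
    4 * (r.coeff 2 * r.coeff 0) ≤ (r.coeff 1) ^ 2 := by
  have hr0 : r ≠ 0 := fun h => h2 (by simp [h])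
  have hd2 : r.natDegree = 2 := le_antisymm hdeg (le_natDegree_of_ne_zero h2)
  have hcard : Multiset.card r.roots = 2 := by rw [hrr, hd2]
  obtain ⟨x, hx⟩ : ∃ x, x ∈ r.roots :=
    Multiset.exists_mem_of_ne_zero (by intro h; rw [h] at hcard; simp at hcard)
  have hroot : r.eval x = 0 := ((mem_roots hr0).mp hx)
  have h3 : r.eval x = r.coeff 0 + r.coeff 1 * x + r.coeff 2 * x ^ 2 := by
    rw [eval_eq_sum_range, hd2]
    simp [Finset.sum_range_succ]
  have heval : r.coeff 2 * (x * x) + r.coeff 1 * x + r.coeff 0 = 0 := by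
    rw [h3] at hroot; linear_combination hroot
  have hdisc := discrim_eq_sq_of_quadratic_eq_zero heval
  rw [discrim] at hdisc
  nlinarith [sq_nonneg (2 * r.coeff 2 * x + r.coeff 1)]

set_option maxHeartbeats 1000000 in
/-- Newton's inequalities: if `p(t) = Σ_{k=0}^n C(n,k) c_k t^k` has non-negative
coefficients and only real roots, then `{c_k}` is log-concave:
`c_k² ≥ c_{k−1} c_{k+1}` for `1 ≤ k ≤ n−1`. -/
theorem stmt10 (n : ℕ) (c : ℕ → ℝ)
    (hc : ∀ k ≤ n, 0 ≤ c k)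
    (hroots : ∀ z : ℂ,
      Polynomial.aeval z
        (∑ k ∈ Finset.range (n + 1),
          Polynomial.C ((n.choose k : ℝ) * c k) * Polynomial.X ^ k) = 0 → z.im = 0) :
    ∀ k : ℕ, 1 ≤ k → k + 1 ≤ n → c (k - 1) * c (k + 1) ≤ c k ^ 2 := by
  intro k hk1 hkn
  obtain ⟨j, rfl⟩ : ∃ j, k = j + 1 := ⟨k - 1, by omega⟩
  obtain ⟨s, rfl⟩ : ∃ s, n = j + 2 + s := ⟨n - (j + 2), by omega⟩
  simp only [Nat.add_sub_cancel]
  show c j * c (j + 2) ≤ c (j + 1) ^ 2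
  set N := j + 2 + s with hN
  -- trivial zero cases
  have hcj1 : 0 ≤ c (j + 1) := hc (j + 1) (by omega)
  rcases eq_or_ne (c j) 0 with h0 | hj0
  · rw [h0, zero_mul]; positivity
  rcases eq_or_ne (c (j + 2)) 0 with h0 | hj2
  · rw [h0, mul_zero]; positivity
  have hcjpos : 0 < c j := lt_of_le_of_ne (hc j (by omega)) (Ne.symm hj0)
  have hcj2pos : 0 < c (j + 2) := lt_of_le_of_ne (hc (j + 2) (by omega)) (Ne.symm hj2)
  set p : ℝ[X] := ∑ i ∈ Finset.range (N + 1), C ((N.choose i : ℝ) * c i) * X ^ i with hp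
  have hcoeff : ∀ i, p.coeff i = if i ≤ N then (N.choose i : ℝ) * c i else 0 := by
    intro i
    rw [hp, finset_sum_coeff]
    simp only [coeff_C_mul, coeff_X_pow, mul_ite, mul_one, mul_zero]
    rw [Finset.sum_ite_eq (Finset.range (N + 1)) i fun i => (N.choose i : ℝ) * c i]
    simp [Nat.lt_succ_iff]
  have hdeg : p.natDegree ≤ N :=
    natDegree_le_iff_coeff_eq_zero.mpr fun m hm => by rw [hcoeff, if_neg (by omega)]
  have hrrP : Multiset.card p.roots = p.natDegree := aux_rr_of_aeval p hroots
  set q := derivative^[j] p with hqdef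
  have hqrr : Multiset.card q.roots = q.natDegree := aux_rr_iterate p hrrP j
  have hq0 : q.coeff 0 = (j.descFactorial j : ℝ) * ((N.choose j : ℝ) * c j) := by
    rw [hqdef, coeff_iterate_derivative, nsmul_eq_mul]
    simp only [zero_add]
    rw [hcoeff, if_pos (by omega)]
  have hq1 : q.coeff 1 = ((j + 1).descFactorial j : ℝ) * ((N.choose (j + 1) : ℝ) * c (j + 1)) := by
    rw [hqdef, coeff_iterate_derivative, nsmul_eq_mul, show 1 + j = j + 1 from by omega,
      hcoeff, if_pos (by omega)]
  have hq2 : q.coeff 2 = ((j + 2).descFactorial j : ℝ) * ((N.choose (j + 2) : ℝ) * c (j + 2)) := by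
    rw [hqdef, coeff_iterate_derivative, nsmul_eq_mul, show 2 + j = j + 2 from by omega,
      hcoeff, if_pos (by omega)]
  have hdescpos : ∀ a b : ℕ, b ≤ a → (0:ℝ) < (a.descFactorial b : ℝ) := fun a b h => by
    exact_mod_cast Nat.pos_of_ne_zero (by rw [Ne, Nat.descFactorial_eq_zero_iff_lt]; omega)
  have hchpos : ∀ i : ℕ, i ≤ N → (0:ℝ) < (N.choose i : ℝ) := fun i h => by
    exact_mod_cast Nat.choose_pos h
  have hq0pos : 0 < q.coeff 0 := by
    rw [hq0]
    exact mul_pos (hdescpos j j le_rfl) (mul_pos (hchpos j (by omega)) hcjpos)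
  have hq2pos : 0 < q.coeff 2 := by
    rw [hq2]
    exact mul_pos (hdescpos (j + 2) j (by omega)) (mul_pos (hchpos (j + 2) (by omega)) hcj2pos)
  have hq0q2 : 0 ≤ q.coeff 0 * q.coeff 2 := le_of_lt (mul_pos hq0pos hq2pos)
  have hd2 : 2 ≤ q.natDegree := le_natDegree_of_ne_zero hq2pos.ne'
  obtain ⟨e, hde⟩ : ∃ e, q.natDegree = e + 2 := ⟨q.natDegree - 2, by omega⟩
  have hdm : q.natDegree ≤ s + 2 := by
    have h1 := natDegree_iterate_derivative p j
    rw [← hqdef] at h1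
    omega
  have hes : e ≤ s := by omega
  -- reverse and second batch of derivatives
  have hrevrr := aux_rr_reverse q hqrr
  set r := derivative^[e] q.reverse with hrdef
  have hrrr : Multiset.card r.roots = r.natDegree := aux_rr_iterate q.reverse hrevrr e
  have hrevdeg : q.reverse.natDegree ≤ e + 2 := (reverse_natDegree_le q).trans (by omega)
  have hrdeg : r.natDegree ≤ 2 := by
    have h1 := natDegree_iterate_derivative q.reverse e
    rw [← hrdef] at h1
    omega
  have hrev2 : q.reverse.coeff (2 + e) = q.coeff 0 := by
    rw [coeff_reverse, revAt_le (show 2 + e ≤ q.natDegree by omega)]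
    congr 1
    omega
  have hrev1 : q.reverse.coeff (1 + e) = q.coeff 1 := by
    rw [coeff_reverse, revAt_le (show 1 + e ≤ q.natDegree by omega)]
    congr 1
    omega
  have hrev0 : q.reverse.coeff e = q.coeff 2 := by
    rw [coeff_reverse, revAt_le (show e ≤ q.natDegree by omega)]
    congr 1
    omega
  have hr2 : r.coeff 2 = ((2 + e).descFactorial e : ℝ) * q.coeff 0 := by
    rw [hrdef, coeff_iterate_derivative, nsmul_eq_mul, hrev2]
  have hr1 : r.coeff 1 = ((1 + e).descFactorial e : ℝ) * q.coeff 1 := by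
    rw [hrdef, coeff_iterate_derivative, nsmul_eq_mul, hrev1]
  have hr0 : r.coeff 0 = (e.descFactorial e : ℝ) * q.coeff 2 := by
    rw [hrdef, coeff_iterate_derivative, nsmul_eq_mul]
    simp only [zero_add]
    rw [hrev0]
  have hr2ne : r.coeff 2 ≠ 0 := by
    rw [hr2]
    exact (mul_pos (hdescpos (2 + e) e (by omega)) hq0pos).ne'
  have hdisc := aux_disc r hrrr hrdeg hr2ne
  -- Step 1: discriminant inequality in terms of q's coefficients
  have key1 : 2 * ((e:ℝ) + 2) * (q.coeff 0 * q.coeff 2) ≤ ((e:ℝ) + 1) * (q.coeff 1) ^ 2 := by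
    have hefpos : (0:ℝ) < (Nat.factorial e : ℝ) := by exact_mod_cast Nat.factorial_pos e
    have h2 : Nat.factorial (e + 2) = (e + 2) * ((e + 1) * Nat.factorial e) := by
      show Nat.factorial (e + 1 + 1) = _
      rw [Nat.factorial_succ, Nat.factorial_succ]
    have hDB : 2 * (((2 + e).descFactorial e : ℕ) : ℝ)
        = ((e:ℝ) + 2) * ((e:ℝ) + 1) * (Nat.factorial e : ℝ) := by
      rw [show 2 + e = e + 2 from by omega]
      calc 2 * (((e + 2).descFactorial e : ℕ) : ℝ)
          = ((2 * (e + 2).descFactorial e : ℕ) : ℝ) := by push_cast; ring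
        _ = ((Nat.factorial (e + 2) : ℕ) : ℝ) := by rw [aux_descB]
        _ = _ := by rw [h2]; push_cast; ring
    have hDA : (((1 + e).descFactorial e : ℕ) : ℝ) = ((e:ℝ) + 1) * (Nat.factorial e : ℝ) := by
      rw [show 1 + e = e + 1 from by omega, aux_descA]
      show ((Nat.factorial (e + 1) : ℕ) : ℝ) = _
      rw [Nat.factorial_succ]
      push_cast; ring
    have hD0 : ((e.descFactorial e : ℕ) : ℝ) = (Nat.factorial e : ℝ) := by
      rw [Nat.descFactorial_self]
    rw [hr2, hr1, hr0, hDA, hD0] at hdisc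
    refine le_of_mul_le_mul_left ?_
      (show (0:ℝ) < ((e:ℝ) + 1) * (Nat.factorial e : ℝ) ^ 2 by positivity)
    calc ((e:ℝ) + 1) * (Nat.factorial e : ℝ) ^ 2 * (2 * ((e:ℝ) + 2) * (q.coeff 0 * q.coeff 2))
        = 4 * ((((2 + e).descFactorial e : ℕ) : ℝ) * q.coeff 0
            * ((Nat.factorial e : ℝ) * q.coeff 2)) := by
          linear_combination (-2 * (Nat.factorial e : ℝ) * (q.coeff 0 * q.coeff 2)) * hDB
      _ ≤ (((e:ℝ) + 1) * (Nat.factorial e : ℝ) * q.coeff 1) ^ 2 := hdisc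
      _ = ((e:ℝ) + 1) * (Nat.factorial e : ℝ) ^ 2 * (((e:ℝ) + 1) * (q.coeff 1) ^ 2) := by ring
  -- Step 2: improve to the full degree bound
  have key2 : 2 * ((s:ℝ) + 2) * (q.coeff 0 * q.coeff 2) ≤ ((s:ℝ) + 1) * (q.coeff 1) ^ 2 := by
    have hse : (e:ℝ) ≤ (s:ℝ) := by exact_mod_cast hes
    refine le_of_mul_le_mul_left ?_ (show (0:ℝ) < (e:ℝ) + 2 by positivity)
    nlinarith [mul_le_mul_of_nonneg_left key1 (show (0:ℝ) ≤ (s:ℝ) + 2 by positivity),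
      mul_nonneg (show (0:ℝ) ≤ (s:ℝ) - (e:ℝ) by linarith) (sq_nonneg (q.coeff 1)), hq0q2]
  -- Step 3: the binomial-coefficient constants
  have hjfpos : (0:ℝ) < (Nat.factorial j : ℝ) := by exact_mod_cast Nat.factorial_pos j
  have hsfpos : (0:ℝ) < (Nat.factorial s : ℝ) := by exact_mod_cast Nat.factorial_pos s
  have hJ0 : ((j.descFactorial j : ℕ) : ℝ) = (Nat.factorial j : ℝ) := by
    rw [Nat.descFactorial_self]
  have hJ1 : (((j + 1).descFactorial j : ℕ) : ℝ) = ((j:ℝ) + 1) * (Nat.factorial j : ℝ) := by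
    rw [aux_descA]
    show ((Nat.factorial (j + 1) : ℕ) : ℝ) = _
    rw [Nat.factorial_succ]
    push_cast; ring
  have hJ2 : (((j + 2).descFactorial j : ℕ) : ℝ)
      = ((j:ℝ) + 2) * ((j:ℝ) + 1) * (Nat.factorial j : ℝ) / 2 := by
    have h2 : Nat.factorial (j + 2) = (j + 2) * ((j + 1) * Nat.factorial j) := by
      show Nat.factorial (j + 1 + 1) = _
      rw [Nat.factorial_succ, Nat.factorial_succ]
    have h3 : ((2 * (j + 2).descFactorial j : ℕ) : ℝ)
        = ((Nat.factorial (j + 2) : ℕ) : ℝ) := by rw [aux_descB]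
    rw [h2] at h3
    push_cast at h3
    linarith
  have hC0 : (N.choose j : ℝ) * (Nat.factorial j : ℝ)
      * (((s:ℝ) + 2) * (((s:ℝ) + 1) * (Nat.factorial s : ℝ))) = (Nat.factorial N : ℝ) := by
    have h := Nat.choose_mul_factorial_mul_factorial (show j ≤ N by omega)
    rw [show N - j = s + 2 from by omega,
      show Nat.factorial (s + 2) = (s + 2) * ((s + 1) * Nat.factorial s) from by
        show Nat.factorial (s + 1 + 1) = _; rw [Nat.factorial_succ, Nat.factorial_succ]] at h
    have h' := congrArg (fun t : ℕ => (t : ℝ)) h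
    push_cast at h'
    linear_combination h'
  have hC1 : (N.choose (j + 1) : ℝ) * (((j:ℝ) + 1) * (Nat.factorial j : ℝ))
      * (((s:ℝ) + 1) * (Nat.factorial s : ℝ)) = (Nat.factorial N : ℝ) := by
    have h := Nat.choose_mul_factorial_mul_factorial (show j + 1 ≤ N by omega)
    rw [show N - (j + 1) = s + 1 from by omega, Nat.factorial_succ j, Nat.factorial_succ s] at h
    have h' := congrArg (fun t : ℕ => (t : ℝ)) h
    push_cast at h'
    linear_combination h'
  have hC2 : (N.choose (j + 2) : ℝ) * (((j:ℝ) + 2) * (((j:ℝ) + 1) * (Nat.factorial j : ℝ)))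
      * (Nat.factorial s : ℝ) = (Nat.factorial N : ℝ) := by
    have h := Nat.choose_mul_factorial_mul_factorial (show j + 2 ≤ N by omega)
    rw [show N - (j + 2) = s from by omega,
      show Nat.factorial (j + 2) = (j + 2) * ((j + 1) * Nat.factorial j) from by
        show Nat.factorial (j + 1 + 1) = _; rw [Nat.factorial_succ, Nat.factorial_succ]] at h
    have h' := congrArg (fun t : ℕ => (t : ℝ)) h
    push_cast at h'
    linear_combination h'
  have hK : 2 * ((s:ℝ) + 2) * (((j.descFactorial j : ℕ) : ℝ) * (N.choose j : ℝ))
        * ((((j + 2).descFactorial j : ℕ) : ℝ) * (N.choose (j + 2) : ℝ))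
      = ((s:ℝ) + 1) * ((((j + 1).descFactorial j : ℕ) : ℝ) * (N.choose (j + 1) : ℝ)) ^ 2 := by
    rw [hJ0, hJ1, hJ2]
    have v0 : (N.choose j : ℝ) = (Nat.factorial N : ℝ)
        / ((Nat.factorial j : ℝ) * (((s:ℝ) + 2) * (((s:ℝ) + 1) * (Nat.factorial s : ℝ)))) := by
      rw [eq_div_iff (by positivity)]
      linear_combination hC0
    have v1 : (N.choose (j + 1) : ℝ) = (Nat.factorial N : ℝ)
        / ((((j:ℝ) + 1) * (Nat.factorial j : ℝ)) * (((s:ℝ) + 1) * (Nat.factorial s : ℝ))) := by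
      rw [eq_div_iff (by positivity)]
      linear_combination hC1
    have v2 : (N.choose (j + 2) : ℝ) = (Nat.factorial N : ℝ)
        / ((((j:ℝ) + 2) * (((j:ℝ) + 1) * (Nat.factorial j : ℝ))) * (Nat.factorial s : ℝ)) := by
      rw [eq_div_iff (by positivity)]
      linear_combination hC2
    rw [v0, v1, v2]
    field_simp
  -- Conclusion
  have hin : (0:ℝ) < (((j + 1).descFactorial j : ℕ) : ℝ) * (N.choose (j + 1) : ℝ) :=
    mul_pos (hdescpos (j + 1) j (by omega)) (hchpos (j + 1) (by omega))
  have hKpos : (0:ℝ) < ((s:ℝ) + 1)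
      * ((((j + 1).descFactorial j : ℕ) : ℝ) * (N.choose (j + 1) : ℝ)) ^ 2 :=
    mul_pos (by positivity) (pow_pos hin 2)
  have h5 : ((s:ℝ) + 1) * ((((j + 1).descFactorial j : ℕ) : ℝ) * (N.choose (j + 1) : ℝ)) ^ 2
        * (c j * c (j + 2))
      ≤ ((s:ℝ) + 1) * ((((j + 1).descFactorial j : ℕ) : ℝ) * (N.choose (j + 1) : ℝ)) ^ 2
        * (c (j + 1)) ^ 2 := by
    calc ((s:ℝ) + 1) * ((((j + 1).descFactorial j : ℕ) : ℝ) * (N.choose (j + 1) : ℝ)) ^ 2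
          * (c j * c (j + 2))
        = 2 * ((s:ℝ) + 2) * (q.coeff 0 * q.coeff 2) := by
          rw [hq0, hq2]
          linear_combination (-(c j * c (j + 2))) * hK
      _ ≤ ((s:ℝ) + 1) * (q.coeff 1) ^ 2 := key2
      _ = _ := by rw [hq1]; ring
  exact le_of_mul_le_mul_left h5 hKpos
end

section
/- Let {a_j}_{j=0}^n and {b_j}_{j=0}^n be non-negative log-concave sequences with no internal zeros such that (i) {a_j + b_j}_{j=0}^n is log-concave with no internal zeros, and (ii) a_j·b_{j+1} ≥ a_{j+1}·b_j for all 0 ≤ j ≤ n−1. If ℓ < k and b_ℓ·a_k > 0, then b_r·a_r > 0 for all ℓ ≤ r ≤ k. -/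
/-- A sequence `c₀,…,cₙ` is non-negative, log-concave and has no internal zeros. -/
def IsLCSeq (n : ℕ) (c : ℕ → ℝ) : Prop :=
  (∀ j ≤ n, 0 ≤ c j) ∧
  (∀ j, 1 ≤ j → j + 1 ≤ n → c (j - 1) * c (j + 1) ≤ c j ^ 2) ∧
  (∀ i j k, i ≤ j → j ≤ k → k ≤ n → 0 < c i → 0 < c k → 0 < c j)

/-- If `{a_j}` and `{b_j}` are LC sequences such that `{a_j + b_j}` is LC and
`a_j b_{j+1} ≥ a_{j+1} b_j`, and `ℓ < k` with `b_ℓ a_k > 0`, then `b_r a_r > 0`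
for all `ℓ ≤ r ≤ k`. -/
theorem stmt11 (n : ℕ) (a b : ℕ → ℝ)
    (ha : IsLCSeq n a) (hb : IsLCSeq n b)
    (hab : IsLCSeq n (fun j => a j + b j))
    (hratio : ∀ j, j + 1 ≤ n → a (j + 1) * b j ≤ a j * b (j + 1))
    (ℓ k : ℕ) (hlk : ℓ < k) (hk : k ≤ n) (hpos : 0 < b ℓ * a k) :
    ∀ r, ℓ ≤ r → r ≤ k → 0 < b r * a r := by
  have hl : ℓ ≤ n := (hlk.le.trans hk)
  have hbl : 0 < b ℓ := by nlinarith [ha.1 k hk, hb.1 ℓ hl]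
  have hak : 0 < a k := by nlinarith [ha.1 k hk, hb.1 ℓ hl]
  -- b is positive throughout [ℓ, k]
  have hB : ∀ r, ℓ ≤ r → r ≤ k → 0 < b r := by
    intro r hr
    induction r, hr using Nat.le_induction with
    | base => intro _; exact hbl
    | succ r hr ih =>
      intro hrk
      have hbr : 0 < b r := ih (le_of_lt (Nat.lt_of_succ_le hrk))
      by_contra hcon
      have hbr1 : b (r + 1) = 0 :=
        le_antisymm (not_lt.mp hcon) (hb.1 (r + 1) (hrk.trans hk))
      have hrat := hratio r (hrk.trans hk)
      have hnn := ha.1 (r + 1) (hrk.trans hk)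
      have h2 : a (r + 1) ≤ 0 := by
        by_contra h; push_neg at h
        rw [hbr1, mul_zero] at hrat
        nlinarith [mul_pos h hbr]
      have har1 : a (r + 1) = 0 := le_antisymm h2 hnn
      have habpos := hab.2.2 ℓ (r + 1) k (by omega) hrk hk
        (by show 0 < a ℓ + b ℓ; linarith [ha.1 ℓ hl])
        (by show 0 < a k + b k; linarith [hb.1 k hk])
      simp [har1, hbr1] at habpos
  -- a is positive throughout [ℓ, k], by downward induction
  have hA : ∀ d r, r + d = k → ℓ ≤ r → 0 < a r := by
    intro d
    induction d with
    | zero => intro r h1 _; have hrk : r = k := by omega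
              rwa [hrk]
    | succ d ih =>
      intro r h1 h2
      have har1 : 0 < a (r + 1) := ih (r + 1) (by omega) (by omega)
      have hrk : r + 1 ≤ k := by omega
      have hrat := hratio r (hrk.trans hk)
      have hbr : 0 < b r := hB r h2 (by omega)
      have hbr1 : 0 ≤ b (r + 1) := hb.1 (r + 1) (hrk.trans hk)
      have har : 0 ≤ a r := ha.1 r (by omega)
      nlinarith
  intro r hr1 hr2
  exact mul_pos (hB r hr1 hr2) (hA (k - r) r (by omega) hr1)
end

section
/- Let G = C_n be the n-cycle (n ≥ 3) with edge set {1,...,n}, and let Z_G(z,q) = Σ_{F ⊆ [n]} q^{k(F)} z^F be its multivariate Tutte polynomial, which equals Π_{j=1}^n (q + z_j) + (q−1)·z_1···z_n. Then for all z ∈ ℝ^n and 0 < q: (∂Z_G/∂z1)·(∂Z_G/∂z2) − Z_G·(∂²Z_G/∂z1∂z2) = q²(1−q)·Π_{j=3}^n z_j(q + z_j). -/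
open MvPolynomial Finset

section aux
variable {n : ℕ}

private lemma split_prod (f : Fin (n + 3) → MvPolynomial (Fin (n + 3)) ℝ) :
    ∏ j : Fin (n + 3), f j =
      f 0 * (f 1 * ∏ j ∈ Finset.univ.filter (fun j : Fin (n + 3) => j ≠ 0 ∧ j ≠ 1), f j) := by
  have h01 : (1 : Fin (n + 3)) ≠ 0 := by
    intro h
    have := congrArg Fin.val h
    simp [Fin.val_one, Fin.val_zero] at this
  have h1 : (1 : Fin (n + 3)) ∈ Finset.univ.erase 0 := by
    simp [Finset.mem_erase, h01]
  have hset : (Finset.univ.erase (0 : Fin (n + 3))).erase 1 =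
      Finset.univ.filter (fun j : Fin (n + 3) => j ≠ 0 ∧ j ≠ 1) := by
    ext j; simp [Finset.mem_erase, Finset.mem_filter, and_comm]
  rw [← Finset.mul_prod_erase Finset.univ f (Finset.mem_univ 0),
      ← Finset.mul_prod_erase _ f h1, hset]

private lemma pderiv_prod_zero (i : Fin (n + 3)) (f : Fin (n + 3) → MvPolynomial (Fin (n + 3)) ℝ)
    (s : Finset (Fin (n + 3))) (h : ∀ j ∈ s, pderiv i (f j) = 0) :
    pderiv i (∏ j ∈ s, f j) = 0 := by
  refine Finset.prod_induction f (fun p => pderiv i p = 0) ?_ ?_ h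
  · intro a b ha hb; rw [pderiv_mul, ha, hb]; ring
  · simp

end aux

/-- For the cycle `C_{n+3}` with multivariate Tutte polynomial
`Z(z,q) = ∏ⱼ (q + zⱼ) + (q−1) z₁⋯z_{n+3}` and `q > 0`, the Rayleigh difference satisfies
`∂₁Z·∂₂Z − Z·∂₁∂₂Z = q²(1−q)·∏_{j≥3} zⱼ(q + zⱼ)`. -/
theorem stmt14 (n : ℕ) (q : ℝ) (hq : 0 < q) :
    ∀ z : Fin (n + 3) → ℝ,
      MvPolynomial.eval z (MvPolynomial.pderiv 0
          ((∏ j : Fin (n + 3), (MvPolynomial.C q + MvPolynomial.X j)) +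
            MvPolynomial.C (q - 1) * ∏ j : Fin (n + 3), MvPolynomial.X j)) *
        MvPolynomial.eval z (MvPolynomial.pderiv 1
          ((∏ j : Fin (n + 3), (MvPolynomial.C q + MvPolynomial.X j)) +
            MvPolynomial.C (q - 1) * ∏ j : Fin (n + 3), MvPolynomial.X j)) -
      MvPolynomial.eval z
          ((∏ j : Fin (n + 3), (MvPolynomial.C q + MvPolynomial.X j)) +
            MvPolynomial.C (q - 1) * ∏ j : Fin (n + 3), MvPolynomial.X j) *
        MvPolynomial.eval z (MvPolynomial.pderiv 0 (MvPolynomial.pderiv 1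
          ((∏ j : Fin (n + 3), (MvPolynomial.C q + MvPolynomial.X j)) +
            MvPolynomial.C (q - 1) * ∏ j : Fin (n + 3), MvPolynomial.X j))) =
      q ^ 2 * (1 - q) *
        ∏ j ∈ Finset.univ.filter (fun j : Fin (n + 3) => j ≠ 0 ∧ j ≠ 1),
          z j * (q + z j) := by
  intro z
  have h01 : (1 : Fin (n + 3)) ≠ 0 := by
    intro h
    have := congrArg Fin.val h
    simp [Fin.val_one, Fin.val_zero] at this
  set s := Finset.univ.filter (fun j : Fin (n + 3) => j ≠ 0 ∧ j ≠ 1) with hs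
  have hmem : ∀ j ∈ s, j ≠ 0 ∧ j ≠ 1 := by
    intro j hj; rw [hs, Finset.mem_filter] at hj; exact hj.2
  have hA0 : pderiv 0 (∏ j ∈ s, (C q + X j) : MvPolynomial (Fin (n + 3)) ℝ) = 0 :=
    pderiv_prod_zero _ _ _ (fun j hj => by
      simp [pderiv_X_of_ne (hmem j hj).1])
  have hA1 : pderiv 1 (∏ j ∈ s, (C q + X j) : MvPolynomial (Fin (n + 3)) ℝ) = 0 :=
    pderiv_prod_zero _ _ _ (fun j hj => by
      simp [pderiv_X_of_ne (hmem j hj).2])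
  have hB0 : pderiv 0 (∏ j ∈ s, (X j) : MvPolynomial (Fin (n + 3)) ℝ) = 0 :=
    pderiv_prod_zero _ _ _ (fun j hj => by
      simp [pderiv_X_of_ne (hmem j hj).1])
  have hB1 : pderiv 1 (∏ j ∈ s, (X j) : MvPolynomial (Fin (n + 3)) ℝ) = 0 :=
    pderiv_prod_zero _ _ _ (fun j hj => by
      simp [pderiv_X_of_ne (hmem j hj).2])
  rw [split_prod (fun j => C q + X j), split_prod (fun j => X j)]
  rw [← hs]
  have h10 : (0 : Fin (n + 3)) ≠ 1 := h01.symm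
  simp only [map_add, pderiv_mul, pderiv_C, hA0, hA1, hB0, hB1, pderiv_X_self,
    pderiv_X_of_ne h01, pderiv_X_of_ne h10, mul_zero, zero_mul, add_zero, zero_add,
    one_mul, mul_one, map_mul, map_one, eval_C, eval_X]
  rw [Finset.prod_mul_distrib, map_prod, map_prod]
  simp only [map_add, eval_C, eval_X]
  ring
end
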